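/- arXiv:1808.02211 — 3 statements merged into one kernel-verified Lean document; each statement's English description precedes it below -/
import Mathlib

section
/- Let T be the 2×2 matrix [[1,1],[0,1]] and let L_T be the induced linear map on S^d(R^2) sending each rank-one tensor u^{⊗d} to (Tu)^{⊗d}. For a tensor A ∈ S^d(R^2), let y ∈ R^{d+1} be defined by y_k = (L_T(A))_{i1...id} where k = i1+...+id − d. Then y = λ_1 (1,t_1,...,t_1^d) + ... + λ_r (1,t_r,...,t_r^d) holds if and only if A = λ_1 (1−t_1, t_1)^{⊗d} + ... + λ_r (1−t_r, t_r)^{⊗d}. -/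
open Matrix MeasureTheory Set

noncomputable section

/-- The `d`-th symmetric tensor power `v^{⊗ d}` of a vector `v ∈ ℝ²`,
viewed as the array of entries indexed by `Fin d → Fin 2`. -/
def tpow (d : ℕ) (v : Fin 2 → ℝ) : (Fin d → Fin 2) → ℝ :=
  fun idx => ∏ k, v (idx k)

/-- A binary tensor is symmetric if its entries are invariant under index permutations. -/
def IsSymTensor (d : ℕ) (A : (Fin d → Fin 2) → ℝ) : Prop :=
  ∀ (σ : Equiv.Perm (Fin d)) (idx : Fin d → Fin 2), A (idx ∘ σ) = A idx

/-- A binary tensor is completely positive (CP) if it is a finite sum of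
`d`-th tensor powers of nonnegative vectors in `ℝ²`. -/
def IsCP (d : ℕ) (A : (Fin d → Fin 2) → ℝ) : Prop :=
  ∃ (r : ℕ) (v : Fin r → Fin 2 → ℝ),
    (∀ i j, 0 ≤ v i j) ∧ A = ∑ i, tpow d (v i)

/-- The cp-rank: the minimal length of a cp-decomposition. -/
def cpRank (d : ℕ) (A : (Fin d → Fin 2) → ℝ) : ℕ :=
  sInf {r | ∃ v : Fin r → Fin 2 → ℝ,
    (∀ i j, 0 ≤ v i j) ∧ A = ∑ i, tpow d (v i)}

/-- The matrix `T = [[1,1],[0,1]]`. -/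
def matT : Matrix (Fin 2) (Fin 2) ℝ := !![1, 1; 0, 1]

/-- The linear map `L_T` on binary tensors induced by a matrix `T`
(multilinear matrix multiplication by `T` in each mode);
it sends `u^{⊗ d}` to `(T u)^{⊗ d}`. -/
def Lmul (d : ℕ) (T : Matrix (Fin 2) (Fin 2) ℝ)
    (A : (Fin d → Fin 2) → ℝ) : (Fin d → Fin 2) → ℝ :=
  fun idx => ∑ j : Fin d → Fin 2, (∏ k, T (idx k) (j k)) * A j

/-- The truncated moment sequence `y` associated to a binary tensor `A`:
`y k` is the entry of `L_T (A)` whose index has exactly `k` components equal to `2`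
(here encoded as `1 : Fin 2`). -/
def momSeq (d : ℕ) (A : (Fin d → Fin 2) → ℝ) : ℕ → ℝ :=
  fun k => Lmul d matT A (fun i => if (i : ℕ) < k then 1 else 0)

/-- The Hankel moment matrix `H₁(y) = (y_{i+j})_{0 ≤ i,j ≤ s}`. -/
def H1 (s : ℕ) (y : ℕ → ℝ) : Matrix (Fin (s + 1)) (Fin (s + 1)) ℝ :=
  fun i j => y ((i : ℕ) + (j : ℕ))

/-- The localizing Hankel matrix `H₂(y) = (y_{i+j+1} - y_{i+j+2})_{0 ≤ i,j ≤ s-1}`. -/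
def H2 (s : ℕ) (y : ℕ → ℝ) : Matrix (Fin s) (Fin s) ℝ :=
  fun i j => y ((i : ℕ) + (j : ℕ) + 1) - y ((i : ℕ) + (j : ℕ) + 2)

/-- The localizing Hankel matrix `H₃(y) = (y_{i+j+1})_{0 ≤ i,j ≤ s}`. -/
def H3 (s : ℕ) (y : ℕ → ℝ) : Matrix (Fin (s + 1)) (Fin (s + 1)) ℝ :=
  fun i j => y ((i : ℕ) + (j : ℕ) + 1)

/-- The localizing Hankel matrix `H₄(y) = (y_{i+j} - y_{i+j+1})_{0 ≤ i,j ≤ s}`. -/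
def H4 (s : ℕ) (y : ℕ → ℝ) : Matrix (Fin (s + 1)) (Fin (s + 1)) ℝ :=
  fun i j => y ((i : ℕ) + (j : ℕ)) - y ((i : ℕ) + (j : ℕ) + 1)

section Aux

lemma fin2cases : ∀ x : Fin 2, x = 0 ∨ x = 1 := by decide

lemma momSeq_eq (d k : ℕ) (A : (Fin d → Fin 2) → ℝ) :
    momSeq d A k = ∑ j ∈ Finset.univ.filter
      (fun j : Fin d → Fin 2 => ∀ i : Fin d, (i : ℕ) < k → j i = 1), A j := by
  classical
  unfold momSeq Lmul
  have key : ∀ j : Fin d → Fin 2,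
      (∏ i : Fin d, matT (if (i : ℕ) < k then 1 else 0) (j i))
        = if (∀ i : Fin d, (i : ℕ) < k → j i = 1) then (1:ℝ) else 0 := by
    intro j
    rw [show (∏ i : Fin d, matT (if (i : ℕ) < k then 1 else 0) (j i))
        = ∏ i : Fin d, (if ((i : ℕ) < k → j i = 1) then (1:ℝ) else 0) from ?_]
    · rw [Finset.prod_boole]
      simp
    · apply Finset.prod_congr rfl
      intro i _
      by_cases h : (i : ℕ) < k
      · rcases fin2cases (j i) with h2 | h2 <;> simp [h, h2, matT]
      · simp [h, matT]
        rcases fin2cases (j i) with h2 | h2 <;> simp [h2, matT]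
  simp_rw [key]
  rw [Finset.sum_filter]
  apply Finset.sum_congr rfl
  intro j _
  by_cases h : (∀ i : Fin d, (i : ℕ) < k → j i = 1) <;> simp [h]

def ones {d : ℕ} (j : Fin d → Fin 2) : ℕ := (Finset.univ.filter fun i => j i = 1).card

lemma ones_le {d : ℕ} (j : Fin d → Fin 2) : ones j ≤ d := by
  classical
  calc ones j ≤ (Finset.univ : Finset (Fin d)).card := Finset.card_filter_le _ _
  _ = d := by simp

lemma card_lt_filter {d k : ℕ} (hk : k ≤ d) :
    (Finset.univ.filter fun i : Fin d => (i : ℕ) < k).card = k := by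
  classical
  have h1 := Finset.filter_map (f := Fin.valEmbedding)
    (s := (Finset.univ : Finset (Fin d))) (p := fun n => n < k)
  have h2 : (((Finset.univ : Finset (Fin d)).map Fin.valEmbedding).filter (fun n => n < k)).card
      = k := by
    rw [Fin.map_valEmbedding_univ]
    rw [show (Finset.Iio d).filter (fun n => n < k) = Finset.Iio k by ext n; simp; omega]
    simp
  rw [h1] at h2
  simpa using h2

lemma ones_ek {d k : ℕ} (hk : k ≤ d) :
    ones (fun i : Fin d => if (i : ℕ) < k then (1 : Fin 2) else 0) = k := by
  classical
  unfold ones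
  rw [show (Finset.univ.filter fun i : Fin d =>
        (if (i : ℕ) < k then (1 : Fin 2) else 0) = 1)
      = Finset.univ.filter (fun i : Fin d => (i : ℕ) < k) by
    ext i; by_cases h : (i : ℕ) < k <;> simp [h]]
  exact card_lt_filter hk

lemma ones_ge {d k : ℕ} (j : Fin d → Fin 2) (hk : k ≤ d)
    (hj : ∀ i : Fin d, (i : ℕ) < k → j i = 1) : k ≤ ones j := by
  classical
  rw [← card_lt_filter (d := d) hk]
  apply Finset.card_le_card
  intro i hi
  simp at hi ⊢
  exact hj i hi

lemma eq_ek {d k : ℕ} (j : Fin d → Fin 2) (hk : k ≤ d)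
    (hj : ∀ i : Fin d, (i : ℕ) < k → j i = 1) (ho : ones j = k) :
    j = fun i : Fin d => if (i : ℕ) < k then (1 : Fin 2) else 0 := by
  classical
  have hsub : (Finset.univ.filter fun i : Fin d => (i : ℕ) < k)
      ⊆ (Finset.univ.filter fun i => j i = 1) := by
    intro i hi; simp at hi ⊢; exact hj i hi
  have hcard : (Finset.univ.filter fun i : Fin d => j i = 1).card
      ≤ (Finset.univ.filter fun i : Fin d => (i : ℕ) < k).card := by
    rw [card_lt_filter hk]; exact le_of_eq ho
  have hEq := Finset.eq_of_subset_of_card_le hsub hcard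
  funext i
  by_cases h : (i : ℕ) < k
  · simp [h, hj i h]
  · have : i ∉ (Finset.univ.filter fun i : Fin d => j i = 1) := by
      rw [← hEq]; simp [h]
    simp at this
    rcases fin2cases (j i) with h2 | h2
    · simp [h, h2]
    · exact absurd h2 this

lemma perm_of_card {d : ℕ} (f g : Fin d → Fin 2)
    (h : (Finset.univ.filter fun i => f i = 1).card = (Finset.univ.filter fun i => g i = 1).card) :
    ∃ σ : Equiv.Perm (Fin d), f ∘ σ = g := by
  classical
  have h1 : Fintype.card {i // g i = 1} = Fintype.card {i // f i = 1} := by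
    simp [Fintype.card_subtype, h]
  have h2 : Fintype.card {i // ¬ g i = 1} = Fintype.card {i // ¬ f i = 1} := by
    simp [Fintype.card_subtype_compl, h1]
  refine ⟨Equiv.subtypeCongr (Fintype.equivOfCardEq h1) (Fintype.equivOfCardEq h2), ?_⟩
  funext i
  have two : ∀ x : Fin 2, x ≠ 1 → x = 0 := by decide
  by_cases hi : g i = 1
  · have hv : Equiv.subtypeCongr (Fintype.equivOfCardEq h1) (Fintype.equivOfCardEq h2) i
        = ((Fintype.equivOfCardEq h1) ⟨i, hi⟩ : Fin d) := by
      simp [Equiv.subtypeCongr, hi]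
    have := ((Fintype.equivOfCardEq h1) ⟨i, hi⟩).2
    simp [Function.comp, hv, this, hi]
  · have hv : Equiv.subtypeCongr (Fintype.equivOfCardEq h1) (Fintype.equivOfCardEq h2) i
        = ((Fintype.equivOfCardEq h2) ⟨i, hi⟩ : Fin d) := by
      simp [Equiv.subtypeCongr, hi]
    have := ((Fintype.equivOfCardEq h2) ⟨i, hi⟩).2
    simp only [Function.comp, hv]
    rw [two _ this, two _ hi]

lemma sym_eq {d : ℕ} {A : (Fin d → Fin 2) → ℝ} (hSym : IsSymTensor d A)
    {f g : Fin d → Fin 2} (h : ones f = ones g) : A f = A g := by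
  obtain ⟨σ, hσ⟩ := perm_of_card f g h
  rw [← hSym σ f, hσ]

lemma zero_of_momSeq {d : ℕ} {B : (Fin d → Fin 2) → ℝ} (hSym : IsSymTensor d B)
    (h : ∀ k ≤ d, momSeq d B k = 0) : B = 0 := by
  classical
  have main : ∀ n : ℕ, ∀ idx : Fin d → Fin 2, d ≤ ones idx + n → B idx = 0 := by
    intro n
    induction n with
    | zero =>
      intro idx hidx
      simp at hidx
      have hones : ones idx = d := le_antisymm (ones_le idx) hidx
      have hsum := (momSeq_eq d d B).symm.trans (h d le_rfl)
      have hone : B (fun i : Fin d => if (i : ℕ) < d then (1 : Fin 2) else 0) = 0 := by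
        rw [← hsum]
        symm
        apply Finset.sum_eq_single_of_mem
        · simp
        · intro j hj hne
          exfalso
          simp only [Finset.mem_filter, Finset.mem_univ, true_and] at hj
          have h1 : d ≤ ones j := ones_ge j le_rfl hj
          have h2 : ones j = d := le_antisymm (ones_le j) h1
          exact hne (eq_ek j le_rfl hj h2)
      rw [sym_eq hSym (g := fun i : Fin d => if (i : ℕ) < d then (1 : Fin 2) else 0)
        (by rw [hones, ones_ek le_rfl])]
      exact hone
    | succ n ih =>
      intro idx hidx
      by_cases hc : d ≤ ones idx + n
      · exact ih idx hc
      set k := ones idx with hk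
      have hkd : k ≤ d := ones_le idx
      have hsum := (momSeq_eq d k B).symm.trans (h k hkd)
      have hone : B (fun i : Fin d => if (i : ℕ) < k then (1 : Fin 2) else 0) = 0 := by
        rw [← hsum]
        symm
        apply Finset.sum_eq_single_of_mem
        · simp
        · intro j hj hne
          simp only [Finset.mem_filter, Finset.mem_univ, true_and] at hj
          have h1 : k ≤ ones j := ones_ge j hkd hj
          have h2 : k ≠ ones j := by
            intro he
            exact hne (eq_ek j hkd hj he.symm)
          apply ih
          omega
      rw [sym_eq hSym (g := fun i : Fin d => if (i : ℕ) < k then (1 : Fin 2) else 0)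
        (by rw [← hk, ones_ek hkd])]
      exact hone
  funext idx
  have := main d idx (by omega)
  simpa using this

lemma momSeq_tpow {d k : ℕ} (hk : k ≤ d) (t : ℝ) :
    momSeq d (tpow d ![1 - t, t]) k = t ^ k := by
  classical
  unfold momSeq Lmul tpow
  simp_rw [← Finset.prod_mul_distrib]
  rw [← Fintype.prod_sum (fun (i : Fin d) (x : Fin 2) => matT (if (i : ℕ) < k then 1 else 0) x * ![1 - t, t] x)]
  have hfac : ∀ i : Fin d,
      (∑ x : Fin 2, matT (if (i : ℕ) < k then 1 else 0) x * ![1 - t, t] x)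
        = if (i : ℕ) < k then t else 1 := by
    intro i
    rw [Fin.sum_univ_two]
    by_cases h : (i : ℕ) < k <;> simp [h, matT]
  simp_rw [hfac]
  rw [Finset.prod_ite]
  simp [Finset.prod_const, card_lt_filter hk]

lemma momSeq_RHS {d : ℕ} {r : ℕ} (lam t : Fin r → ℝ) {k : ℕ} (hk : k ≤ d) :
    momSeq d (∑ i, lam i • tpow d ![1 - t i, t i]) k = ∑ i, lam i * t i ^ k := by
  classical
  rw [momSeq_eq]
  simp only [Finset.sum_apply, Pi.smul_apply, smul_eq_mul]
  rw [Finset.sum_comm]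
  apply Finset.sum_congr rfl
  intro i _
  rw [← Finset.mul_sum, ← momSeq_eq, momSeq_tpow hk]

lemma tpow_sym {d : ℕ} (v : Fin 2 → ℝ) : IsSymTensor d (tpow d v) := by
  intro σ idx
  unfold tpow
  exact Equiv.prod_comp σ (fun i => v (idx i))


end Aux

/-- with `y` the moment sequence of `L_T(A)` for `T = [[1,1],[0,1]]`,
`y = Σ λ_i [t_i]_d` holds iff `A = Σ λ_i (1 - t_i, t_i)^{⊗d}`. -/
theorem stmt2 (d : ℕ) (A : (Fin d → Fin 2) → ℝ) (hSym : IsSymTensor d A)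
    (r : ℕ) (lam t : Fin r → ℝ) :
    (∀ k ≤ d, momSeq d A k = ∑ i, lam i * t i ^ k) ↔
      A = ∑ i, lam i • tpow d ![1 - t i, t i] := by
  classical
  constructor
  · intro h
    set R : (Fin d → Fin 2) → ℝ := ∑ i, lam i • tpow d ![1 - t i, t i] with hR
    have hRsym : IsSymTensor d R := by
      intro σ idx
      simp only [hR, Finset.sum_apply, Pi.smul_apply, smul_eq_mul]
      exact Finset.sum_congr rfl fun i _ => by rw [tpow_sym _ σ idx]
    have hBsym : IsSymTensor d (fun j => A j - R j) := by
      intro σ idx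
      simp only []
      rw [hSym σ idx, hRsym σ idx]
    have hBmom : ∀ k ≤ d, momSeq d (fun j => A j - R j) k = 0 := by
      intro k hk
      have hsub : momSeq d (fun j => A j - R j) k = momSeq d A k - momSeq d R k := by
        rw [momSeq_eq, momSeq_eq, momSeq_eq, ← Finset.sum_sub_distrib]
      rw [hsub, h k hk, momSeq_RHS lam t hk]
      ring
    have hB := zero_of_momSeq hBsym hBmom
    funext j
    have := congrFun hB j
    simp at this
    linarith [this]
  · intro h k hk
    rw [h]
    exact momSeq_RHS lam t hk
end
end

section
/- Let y = (y_0,...,y_{2s+1}) with y_0 > 0, H_3(y) ⪰ 0, H_4(y) ⪰ 0, and let r = rank H_1(y) where H_1(y) = (y_{i+j})_{0≤i,j≤s}. Then y has a unique r-atomic representing measure, and its support is contained in [0,1]. -/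
open Matrix MeasureTheory Set

noncomputable section

/-- quadratic form as diagonal entry of `Bᴴ * M * B` -/
lemma quad_entry {n m : Type*} [Fintype n] [Fintype m]
    (M : Matrix n n ℝ) (B : Matrix n m ℝ) (j : m) :
    (Bᴴ * M * B) j j = star (fun a => B a j) ⬝ᵥ (M *ᵥ (fun a => B a j)) := by
  simp only [mul_apply, conjTranspose_apply, dotProduct, mulVec, star_trivial]
  simp only [Finset.sum_mul, Finset.mul_sum]
  rw [Finset.sum_comm]
  exact Finset.sum_congr rfl fun a _ => Finset.sum_congr rfl fun b _ => by ring

theorem momrep (s r : ℕ) (y : ℕ → ℝ)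
    (h3 : (H3 s y).PosSemidef) (h4 : (H4 s y).PosSemidef)
    (hr : r = (H1 s y).rank) :
    ∃ t lam : Fin r → ℝ, Function.Injective t ∧ (∀ i, 0 < lam i) ∧
      (∀ i, t i ∈ Set.Icc (0 : ℝ) 1) ∧
      ∀ k ≤ 2 * s + 1, y k = ∑ i, lam i * t i ^ k := by
  classical
  have hsum : H1 s y = H3 s y + H4 s y := by
    ext i j; simp [H1, H3, H4]
  have hM : (H1 s y).PosSemidef := by rw [hsum]; exact h3.add h4
  have hHerm : (H1 s y).IsHermitian := hM.1
  set ν : Fin (s + 1) → ℝ := hHerm.eigenvalues with hν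
  have hν0 : ∀ i, 0 ≤ ν i := hM.eigenvalues_nonneg
  set U : Matrix (Fin (s + 1)) (Fin (s + 1)) ℝ := (hHerm.eigenvectorUnitary : Matrix (Fin (s+1)) (Fin (s+1)) ℝ) with hUdef
  have hU1 : star U * U = 1 := Matrix.mem_unitaryGroup_iff'.mp hHerm.eigenvectorUnitary.2
  have hU2 : U * star U = 1 := Matrix.mem_unitaryGroup_iff.mp hHerm.eigenvectorUnitary.2
  have hspec : H1 s y = U * diagonal ν * star U := hHerm.spectral_theorem
  have hcard : Fintype.card {i // ν i ≠ 0} = r := by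
    rw [hr, hHerm.rank_eq_card_non_zero_eigs]
  set e : Fin r ≃ {i // ν i ≠ 0} := (Fintype.equivFinOfCardEq hcard).symm with he
  set W : Matrix (Fin r) (Fin (s + 1)) ℝ :=
    fun i a => Real.sqrt (ν (e i)) * U a (e i) with hW
  -- sums over the support of ν
  have hsupp : ∀ f : Fin (s + 1) → ℝ, (∀ j, ν j = 0 → f j = 0) →
      ∑ i : Fin r, f (e i) = ∑ j, f j := by
    intro f hf
    rw [Equiv.sum_comp e (fun x => f (x : Fin (s + 1)))]
    rw [← Finset.sum_subtype (Finset.univ.filter (fun j => ν j ≠ 0))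
      (by simp) (fun j => f j)]
    exact Finset.sum_filter_of_ne (fun x _ hfx => fun hx => hfx (hf x hx))
  -- `Wᵀ * W = H1`
  have hWtW : Wᵀ * W = H1 s y := by
    ext a b
    have hL : (Wᵀ * W) a b = ∑ i : Fin r, (fun j => ν j * (U a j * U b j)) ((e i : Fin (s+1))) := by
      rw [mul_apply]
      refine Finset.sum_congr rfl fun i _ => ?_
      rw [transpose_apply]; simp only [hW]
      rw [show √(ν (e i)) * U a (e i) * (√(ν (e i)) * U b (e i))
          = (√(ν (e i)) * √(ν (e i))) * (U a (e i) * U b (e i)) by ring,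
        Real.mul_self_sqrt (hν0 _)]
    rw [hL]
    rw [hsupp (fun j => ν j * (U a j * U b j)) (fun j hj => by show ν j * (U a j * U b j) = 0; rw [hj, zero_mul])]
    rw [hspec, Matrix.mul_assoc, mul_apply]
    refine Finset.sum_congr rfl fun j _ => ?_
    rw [Matrix.diagonal_mul]
    simp only [Matrix.star_apply, star_trivial]
    ring
  -- row independence of W
  have hrow : ∀ xv : Fin r → ℝ, (∀ a, ∑ i, xv i * W i a = 0) → xv = 0 := by
    intro xv hxv
    set z : Fin (s + 1) → ℝ :=
      fun j => if h : ν j ≠ 0 then xv (e.symm ⟨j, h⟩) * Real.sqrt (ν j) else 0 with hz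
    have hUz : U *ᵥ z = 0 := by
      funext a
      have h1 : (U *ᵥ z) a = ∑ j, U a j * z j := by
        simp [Matrix.mulVec, dotProduct]
      have h2 : ∑ i : Fin r, (fun j => U a j * z j) ((e i : Fin (s+1))) = ∑ j, U a j * z j :=
        hsupp _ (fun j hj => by show U a j * z j = 0; simp [hz, hj])
      have h3 : ∑ i : Fin r, (fun j => U a j * z j) ((e i : Fin (s+1))) = ∑ i, xv i * W i a := by
        refine Finset.sum_congr rfl fun i _ => ?_
        have hzi : z (e i) = xv i * Real.sqrt (ν (e i)) := by
          simp only [hz, dif_pos (e i).2, Subtype.coe_eta, e.symm_apply_apply]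
        show U a (e i) * z (e i) = _
        rw [hzi, hW]
        ring
      have : (U *ᵥ z) a = 0 := by rw [h1, ← h2, h3, hxv a]
      simpa using this
    have hz0 : z = 0 := by
      have : z = (star U * U) *ᵥ z := by rw [hU1, Matrix.one_mulVec]
      rw [this, ← Matrix.mulVec_mulVec, hUz, Matrix.mulVec_zero]
    funext i
    have h1 : z (e i) = 0 := by rw [hz0]; rfl
    have h2 : z (e i) = xv i * Real.sqrt (ν (e i)) := by
      simp only [hz, dif_pos (e i).2, Subtype.coe_eta, e.symm_apply_apply]
    rw [h2] at h1
    have hc : Real.sqrt (ν (e i)) ≠ 0 :=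
      Real.sqrt_ne_zero'.mpr (lt_of_le_of_ne (hν0 _) (Ne.symm (e i).2))
    have := mul_eq_zero.mp h1
    rcases this with h | h
    · exact h
    · exact absurd h hc
  -- the Gram matrix of the rows
  set G : Matrix (Fin r) (Fin r) ℝ := W * Wᵀ with hG
  have hGdet : IsUnit G.det := by
    rw [isUnit_iff_ne_zero]
    intro hdet
    obtain ⟨v, hv0, hv⟩ := Matrix.exists_mulVec_eq_zero_iff.mpr hdet
    apply hv0
    apply hrow
    intro a
    have hq : v ⬝ᵥ (G *ᵥ v) = 0 := by rw [hv, dotProduct_zero]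
    have hGv : v ⬝ᵥ (G *ᵥ v) = (Matrix.vecMul v W) ⬝ᵥ (Matrix.vecMul v W) := by
      rw [hG, ← Matrix.mulVec_mulVec, Matrix.dotProduct_mulVec, Matrix.mulVec_transpose]
    have hvW : Matrix.vecMul v W = 0 :=
      dotProduct_self_eq_zero.mp (hGv.symm.trans hq)
    have := congrFun hvW a
    simpa [Matrix.vecMul, dotProduct] using this
  have hGinv1 : G * G⁻¹ = 1 := Matrix.mul_nonsing_inv _ hGdet
  have hGinv2 : G⁻¹ * G = 1 := Matrix.nonsing_inv_mul _ hGdet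
  have hGsym : Gᵀ = G := by rw [hG, Matrix.transpose_mul, Matrix.transpose_transpose]
  have hGinvsym : (G⁻¹)ᵀ = G⁻¹ := by rw [Matrix.transpose_nonsing_inv, hGsym]
  have hH1T : (H1 s y)ᵀ = H1 s y := by
    ext i j; exact congrArg y (Nat.add_comm (j : ℕ) (i : ℕ))
  have hH3T : (H3 s y)ᵀ = H3 s y := by
    ext i j; exact congrArg y (by omega : (j : ℕ) + (i : ℕ) + 1 = (i : ℕ) + (j : ℕ) + 1)
  set P : Matrix (Fin (s + 1)) (Fin (s + 1)) ℝ := Wᵀ * G⁻¹ * W with hP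
  have hPW : P * Wᵀ = Wᵀ := by
    have h1 : P * Wᵀ = Wᵀ * (G⁻¹ * (W * Wᵀ)) := by rw [hP]; simp only [Matrix.mul_assoc]
    rw [h1, ← hG, hGinv2, Matrix.mul_one]
  have hPsym : Pᵀ = P := by
    rw [hP, Matrix.transpose_mul, Matrix.transpose_mul, Matrix.transpose_transpose, hGinvsym]
    simp only [Matrix.mul_assoc]
  have hPH1 : P * H1 s y = H1 s y := by rw [← hWtW, ← Matrix.mul_assoc, hPW]
  have hNH1 : (1 - P) * H1 s y = 0 := by rw [sub_mul, one_mul, hPH1, sub_self]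
  have hNsym : (1 - P)ᵀ = 1 - P := by
    rw [Matrix.transpose_sub, Matrix.transpose_one, hPsym]
  have hH1N : H1 s y * (1 - P) = 0 := by
    have h := congrArg Matrix.transpose hNH1
    rwa [Matrix.transpose_mul, hNsym, hH1T, Matrix.transpose_zero] at h
  -- squeeze: `H3 * (1 - P) = 0`
  have hH3N : H3 s y * (1 - P) = 0 := by
    have hkey : ∀ x : Fin (s + 1) → ℝ, (H3 s y) *ᵥ ((1 - P) *ᵥ x) = 0 := by
      intro x
      set u := (1 - P) *ᵥ x with hu
      have hq3 : 0 ≤ u ⬝ᵥ (H3 s y *ᵥ u) := by simpa using h3.dotProduct_mulVec_nonneg u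
      have hq4 : 0 ≤ u ⬝ᵥ (H4 s y *ᵥ u) := by simpa using h4.dotProduct_mulVec_nonneg u
      have h2 : (H1 s y) *ᵥ u = 0 := by
        rw [hu, Matrix.mulVec_mulVec, hH1N, Matrix.zero_mulVec]
      have h1 : u ⬝ᵥ ((H1 s y) *ᵥ u) = u ⬝ᵥ (H3 s y *ᵥ u) + u ⬝ᵥ (H4 s y *ᵥ u) := by
        rw [hsum, Matrix.add_mulVec, dotProduct_add]
      rw [h2, dotProduct_zero] at h1
      have h30 : u ⬝ᵥ (H3 s y *ᵥ u) = 0 := by linarith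
      exact (h3.dotProduct_mulVec_zero_iff u).mp (by simpa using h30.symm ▸ h30)
    ext i j
    have h := congrFun ((Matrix.mulVec_mulVec _ (H3 s y) (1 - P)).symm.trans
      (hkey (Pi.single j 1))) i
    simpa [Matrix.mulVec_single] using h
  have hH3P : H3 s y * P = H3 s y := by
    have h := hH3N
    rw [Matrix.mul_sub, Matrix.mul_one, sub_eq_zero] at h
    exact h.symm
  have hPH3 : P * H3 s y = H3 s y := by
    have h := congrArg Matrix.transpose hH3P
    rwa [Matrix.transpose_mul, hH3T, hPsym] at h
  -- the operator A
  set A : Matrix (Fin r) (Fin r) ℝ := G⁻¹ * W * H3 s y * Wᵀ * G⁻¹ with hA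
  set B : Matrix (Fin (s + 1)) (Fin r) ℝ := Wᵀ * G⁻¹ with hB
  have hBH : Bᴴ = G⁻¹ * W := by
    have h0 : Bᴴ = Bᵀ := rfl
    rw [h0, hB, Matrix.transpose_mul, hGinvsym, Matrix.transpose_transpose]
  have hAB : A = Bᴴ * H3 s y * B := by
    rw [hBH, hB, hA]; simp only [Matrix.mul_assoc]
  have hApsd : A.PosSemidef := by rw [hAB]; exact h3.conjTranspose_mul_mul_same B
  have hBH1B : Bᴴ * H1 s y * B = 1 := by
    rw [hBH, hB, ← hWtW]
    have h1 : G⁻¹ * W * (Wᵀ * W) * (Wᵀ * G⁻¹) = G⁻¹ * ((W * Wᵀ) * ((W * Wᵀ) * G⁻¹)) := by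
      simp only [Matrix.mul_assoc]
    rw [h1, ← hG, hGinv1, Matrix.mul_one, hGinv2]
  have h1Apsd : (1 - A).PosSemidef := by
    have hH4d : H4 s y = H1 s y - H3 s y := by
      ext i j; simp [H1, H3, H4]
    have h41 : Bᴴ * H4 s y * B = 1 - A := by
      rw [hH4d, Matrix.mul_sub, Matrix.sub_mul, hBH1B, hAB]
    rw [← h41]; exact h4.conjTranspose_mul_mul_same B
  have hGWH1 : G⁻¹ * (W * H1 s y) = W := by
    rw [← hWtW, ← Matrix.mul_assoc W Wᵀ W, ← hG, ← Matrix.mul_assoc, hGinv2, Matrix.one_mul]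
  have hAW : A * W = G⁻¹ * (W * H3 s y) := by
    have h1 : A * W = G⁻¹ * (W * (H3 s y * P)) := by
      rw [hA, hP, hB]; simp only [Matrix.mul_assoc]
    rw [h1, hH3P]
  -- spectral decomposition of A
  have hAherm : A.IsHermitian := hApsd.1
  set mu : Fin r → ℝ := hAherm.eigenvalues with hmu
  set Q : Matrix (Fin r) (Fin r) ℝ := (hAherm.eigenvectorUnitary : Matrix (Fin r) (Fin r) ℝ)
    with hQdef
  have hQ1 : star Q * Q = 1 := Matrix.mem_unitaryGroup_iff'.mp hAherm.eigenvectorUnitary.2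
  have hQ2 : Q * star Q = 1 := Matrix.mem_unitaryGroup_iff.mp hAherm.eigenvectorUnitary.2
  have hQdiag : star Q * A * Q = diagonal mu := by
    rw [show A = Q * diagonal mu * star Q from hAherm.spectral_theorem]
    simp only [Matrix.mul_assoc, hQ1, Matrix.mul_one]
    rw [← Matrix.mul_assoc, hQ1, Matrix.one_mul]
  have hAspec : A = Q * diagonal mu * star Q := hAherm.spectral_theorem
  have hQA : star Q * A = diagonal mu * star Q := by
    calc star Q * A = star Q * A * (Q * star Q) := by rw [hQ2, Matrix.mul_one]
      _ = (star Q * A * Q) * star Q := by simp only [Matrix.mul_assoc]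
      _ = diagonal mu * star Q := by rw [hQdiag]
  set V : Matrix (Fin r) (Fin (s + 1)) ℝ := star Q * W with hV
  have hsQT : (star Q)ᵀ = Q := by
    rw [show star Q = Qᵀ from rfl, Matrix.transpose_transpose]
  have hVtV : Vᵀ * V = H1 s y := by
    rw [hV, ← hWtW]
    calc (star Q * W)ᵀ * (star Q * W) = Wᵀ * Q * (star Q * W) := by
          rw [Matrix.transpose_mul, hsQT]
      _ = Wᵀ * ((Q * star Q) * W) := by simp only [Matrix.mul_assoc]
      _ = Wᵀ * W := by rw [hQ2, Matrix.one_mul]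
  have hVDV : Vᵀ * (diagonal mu * V) = H3 s y := by
    rw [hV]
    calc (star Q * W)ᵀ * (diagonal mu * (star Q * W))
        = Wᵀ * (Q * (diagonal mu * (star Q * W))) := by
          rw [Matrix.transpose_mul, hsQT, Matrix.mul_assoc]
      _ = Wᵀ * ((Q * diagonal mu * star Q) * W) := by simp only [Matrix.mul_assoc]
      _ = Wᵀ * (A * W) := by rw [← hAspec]
      _ = Wᵀ * (G⁻¹ * (W * H3 s y)) := by rw [hAW]
      _ = (Wᵀ * G⁻¹ * W) * H3 s y := by simp only [Matrix.mul_assoc]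
      _ = H3 s y := by rw [← hP, hPH3]
  -- shift property of columns of V
  have hcolW : ∀ (k : ℕ) (hk : k < s) (i : Fin r),
      (A * W) i ⟨k, by omega⟩ = W i ⟨k + 1, by omega⟩ := by
    intro k hk i
    rw [hAW]
    have hWH : ∀ m : Fin r, (W * H3 s y) m ⟨k, by omega⟩ = (W * H1 s y) m ⟨k + 1, by omega⟩ := by
      intro m
      rw [mul_apply, mul_apply]
      refine Finset.sum_congr rfl fun j _ => ?_
      show W m j * y ((j : ℕ) + k + 1) = W m j * y ((j : ℕ) + (k + 1))
      rw [(by omega : (j : ℕ) + k + 1 = (j : ℕ) + (k + 1))]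
    have h1 : (G⁻¹ * (W * H3 s y)) i ⟨k, by omega⟩
        = (G⁻¹ * (W * H1 s y)) i ⟨k + 1, by omega⟩ := by
      rw [mul_apply, mul_apply]
      exact Finset.sum_congr rfl fun m _ => by rw [hWH m]
    rw [h1, hGWH1]
  have hshift : ∀ (k : ℕ) (hk : k < s) (i : Fin r),
      V i ⟨k + 1, by omega⟩ = mu i * V i ⟨k, by omega⟩ := by
    intro k hk i
    have hDV : diagonal mu * V = star Q * (A * W) := by
      rw [hV, ← Matrix.mul_assoc, ← hQA, Matrix.mul_assoc]
    have h1 : (star Q * (A * W)) i ⟨k, by omega⟩ = (star Q * W) i ⟨k + 1, by omega⟩ := by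
      rw [mul_apply, mul_apply]
      exact Finset.sum_congr rfl fun j _ => by rw [hcolW k hk j]
    have h2 : (diagonal mu * V) i ⟨k, by omega⟩ = mu i * V i ⟨k, by omega⟩ :=
      Matrix.diagonal_mul mu V i ⟨k, by omega⟩
    rw [hV, ← h1, ← hDV, h2]
  set c : Fin r → ℝ := fun i => V i ⟨0, by omega⟩ with hcdef
  have hVpow : ∀ (k : ℕ) (hk : k ≤ s) (i : Fin r), V i ⟨k, by omega⟩ = c i * mu i ^ k := by
    intro k
    induction k with
    | zero => intro hk i; simp [hcdef]
    | succ n ih =>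
      intro hk i
      rw [hshift n (by omega) i, ih (by omega) i]
      ring
  have hVa : ∀ (i : Fin r) (a : Fin (s + 1)), V i a = c i * mu i ^ (a : ℕ) := by
    intro i a
    have := hVpow (a : ℕ) (by omega) i
    rwa [Fin.eta] at this
  -- row independence of V
  have hrowV : ∀ xv : Fin r → ℝ, (∀ a, ∑ i, xv i * V i a = 0) → xv = 0 := by
    intro xv hxv
    have h1 : Matrix.vecMul xv V = 0 := by
      funext a
      simpa [Matrix.vecMul, dotProduct] using hxv a
    have h2 : Matrix.vecMul (Matrix.vecMul xv (star Q)) W = 0 := by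
      rw [Matrix.vecMul_vecMul, ← hV, h1]
    have h3 : Matrix.vecMul xv (star Q) = 0 := by
      apply hrow
      intro a
      simpa [Matrix.vecMul, dotProduct] using congrFun h2 a
    have h4 : xv = Matrix.vecMul (Matrix.vecMul xv (star Q)) Q := by
      rw [Matrix.vecMul_vecMul, hQ1, Matrix.vecMul_one]
    rw [h4, h3, Matrix.zero_vecMul]
  -- the coefficients are all nonzero
  have hc0 : ∀ i, c i ≠ 0 := by
    intro i hci
    have hV0 : ∀ a, V i a = 0 := fun a => by rw [hVa i a, hci, zero_mul]
    have h := hrowV (Pi.single i 1) (fun a => by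
      rw [Finset.sum_eq_single i]
      · rw [Pi.single_eq_same, one_mul]; exact hV0 a
      · intro b _ hb; rw [Pi.single_eq_of_ne hb, zero_mul]
      · intro hni; exact absurd (Finset.mem_univ i) hni)
    have := congrFun h i
    rw [Pi.single_eq_same] at this
    exact one_ne_zero this
  -- eigenvalues are pairwise distinct
  have hmuinj : Function.Injective mu := by
    intro i j hij
    by_contra hne
    have h := hrowV (fun k => (if k = i then c j else 0) - (if k = j then c i else 0))
      (fun a => by
      have hsingle : ∀ (m : Fin r) (d : ℝ), ∑ k, (if k = m then d else 0) * V k a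
          = d * V m a := by
        intro m d
        rw [Finset.sum_eq_single m]
        · rw [if_pos rfl]
        · intro b _ hb; rw [if_neg hb, zero_mul]
        · intro hni; exact absurd (Finset.mem_univ m) hni
      calc ∑ k, ((if k = i then c j else 0) - (if k = j then c i else 0)) * V k a
          = ∑ k, ((if k = i then c j else 0) * V k a - (if k = j then c i else 0) * V k a) :=
            Finset.sum_congr rfl fun k _ => by ring
        _ = (∑ k, (if k = i then c j else 0) * V k a)
              - (∑ k, (if k = j then c i else 0) * V k a) := Finset.sum_sub_distrib _ _
        _ = c j * V i a - c i * V j a := by rw [hsingle i (c j), hsingle j (c i)]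
        _ = 0 := by rw [hVa i a, hVa j a, hij]; ring)
    have h2 := congrFun h i
    simp only [if_pos rfl, if_neg hne, sub_zero] at h2
    exact hc0 j h2
  -- eigenvalues lie in [0, 1]
  have hquad : ∀ i, mu i = star (fun a => Q a i) ⬝ᵥ (A *ᵥ (fun a => Q a i)) := by
    intro i
    calc mu i = diagonal mu i i := (Matrix.diagonal_apply_eq mu i).symm
      _ = (star Q * A * Q) i i := by rw [hQdiag]
      _ = star (fun a => Q a i) ⬝ᵥ (A *ᵥ (fun a => Q a i)) := quad_entry A Q i
  have hmu0 : ∀ i, 0 ≤ mu i := fun i => by rw [hquad i]; exact hApsd.dotProduct_mulVec_nonneg _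
  have hmu1 : ∀ i, mu i ≤ 1 := by
    intro i
    have hq := h1Apsd.dotProduct_mulVec_nonneg (fun a => Q a i)
    have hx1 : star (fun a => Q a i) ⬝ᵥ ((1 : Matrix (Fin r) (Fin r) ℝ) *ᵥ (fun a => Q a i))
        = 1 := by
      have h := quad_entry (1 : Matrix (Fin r) (Fin r) ℝ) Q i
      rw [← h, Matrix.mul_one, show Qᴴ = star Q from rfl, hQ1, Matrix.one_apply_eq]
    have hsub : star (fun a => Q a i) ⬝ᵥ ((1 - A) *ᵥ (fun a => Q a i)) = 1 - mu i := by
      rw [Matrix.sub_mulVec, dotProduct_sub, hx1, ← hquad i]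
    rw [hsub] at hq
    linarith
  -- the moment identities
  have hmomH1 : ∀ a b : Fin (s + 1),
      y ((a : ℕ) + (b : ℕ)) = ∑ i, (c i) ^ 2 * mu i ^ ((a : ℕ) + (b : ℕ)) := by
    intro a b
    have h1 : y ((a : ℕ) + (b : ℕ)) = (Vᵀ * V) a b := by rw [hVtV]; rfl
    rw [h1, mul_apply]
    refine Finset.sum_congr rfl fun i _ => ?_
    show V i a * V i b = _
    rw [hVa i a, hVa i b, pow_add]
    ring
  have hmomH3 : ∀ a b : Fin (s + 1),
      y ((a : ℕ) + (b : ℕ) + 1) = ∑ i, (c i) ^ 2 * mu i ^ ((a : ℕ) + (b : ℕ) + 1) := by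
    intro a b
    have h1 : y ((a : ℕ) + (b : ℕ) + 1) = (Vᵀ * (diagonal mu * V)) a b := by rw [hVDV]; rfl
    rw [h1, mul_apply]
    refine Finset.sum_congr rfl fun i _ => ?_
    show V i a * (diagonal mu * V) i b = _
    rw [Matrix.diagonal_mul, hVa i a, hVa i b, pow_add, pow_add]
    ring
  -- conclusion
  refine ⟨mu, fun i => (c i) ^ 2, hmuinj, ?_, fun i => ⟨hmu0 i, hmu1 i⟩, ?_⟩
  · intro i
    have := hc0 i
    positivity
  · intro k hk
    by_cases hks : k ≤ 2 * s
    · have ha : min k s ≤ s := min_le_right _ _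
      have hb : k - min k s ≤ s := by omega
      have := hmomH1 ⟨min k s, by omega⟩ ⟨k - min k s, by omega⟩
      have hab : min k s + (k - min k s) = k := by omega
      rw [show ((⟨min k s, by omega⟩ : Fin (s+1)) : ℕ) = min k s from rfl,
        show ((⟨k - min k s, by omega⟩ : Fin (s+1)) : ℕ) = k - min k s from rfl, hab] at this
      exact this
    · have hk' : k = 2 * s + 1 := by omega
      have := hmomH3 ⟨s, by omega⟩ ⟨s, by omega⟩
      rw [show ((⟨s, by omega⟩ : Fin (s+1)) : ℕ) = s from rfl,
        show s + s + 1 = 2 * s + 1 by ring] at this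
      rw [hk']
      exact this





theorem mom_unique {r n : ℕ} (hrn : 2 * r ≤ n)
    (t lam t' lam' : Fin r → ℝ)
    (ht : Function.Injective t) (ht' : Function.Injective t')
    (hl : ∀ i, 0 < lam i) (hl' : ∀ i, 0 < lam' i)
    (hmom : ∀ k < n, ∑ i, lam i * t i ^ k = ∑ i, lam' i * t' i ^ k) :
    ∃ σ : Equiv.Perm (Fin r), ∀ i, t' (σ i) = t i ∧ lam' (σ i) = lam i := by
  classical
  set T : Finset ℝ := (Finset.univ.image t) ∪ (Finset.univ.image t') with hT
  have hcard : T.card ≤ n := by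
    calc T.card ≤ (Finset.univ.image t).card + (Finset.univ.image t').card :=
          Finset.card_union_le _ _
    _ ≤ r + r := by gcongr <;> exact (Finset.card_image_le).trans (by simp)
    _ ≤ n := by omega
  set m := T.card with hm
  set x : Fin m → ℝ := fun j => (T.orderIsoOfFin rfl j : ℝ) with hx
  have hxinj : Function.Injective x := fun a b hab =>
    (T.orderIsoOfFin rfl).injective (Subtype.ext hab)
  have hsurj : ∀ z ∈ T, ∃ j, x j = z := by
    intro z hz
    obtain ⟨j, hj⟩ := (T.orderIsoOfFin rfl).surjective ⟨z, hz⟩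
    exact ⟨j, congrArg Subtype.val hj⟩
  have htT : ∀ i, t i ∈ T := fun i => Finset.mem_union_left _ (Finset.mem_image_of_mem _ (by simp))
  have ht'T : ∀ i, t' i ∈ T := fun i =>
    Finset.mem_union_right _ (Finset.mem_image_of_mem _ (by simp))
  have key : ∀ (u : Fin r → ℝ) (v : Fin r → ℝ),
      (∀ i, u i ∈ T) → ∀ k : ℕ,
      ∑ j, (∑ i, if u i = x j then v i else 0) * x j ^ k = ∑ i, v i * u i ^ k := by
    intro u v huT k
    calc ∑ j, (∑ i, if u i = x j then v i else 0) * x j ^ k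
        = ∑ j, ∑ i, (if u i = x j then v i * x j ^ k else 0) := by
          refine Finset.sum_congr rfl fun j _ => ?_
          rw [Finset.sum_mul]
          exact Finset.sum_congr rfl fun i _ => by split <;> simp
      _ = ∑ i, ∑ j, (if u i = x j then v i * x j ^ k else 0) := Finset.sum_comm
      _ = ∑ i, v i * u i ^ k := by
          refine Finset.sum_congr rfl fun i _ => ?_
          obtain ⟨j0, hj0⟩ := hsurj (u i) (huT i)
          rw [Finset.sum_eq_single j0]
          · rw [hj0]; simp
          · intro j _ hj
            have : u i ≠ x j := fun h => hj (hxinj (hj0.trans h).symm ▸ rfl)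
            simp [this]
          · simp
  set w : Fin m → ℝ := fun j =>
    (∑ i, if t i = x j then lam i else 0) - (∑ i, if t' i = x j then lam' i else 0) with hw
  have hwz : ∀ j, w j = 0 := by
    have h0 : ∀ p : Fin m, ∑ j, w j * x j ^ (p : ℕ) = 0 := by
      intro p
      have hpn : (p : ℕ) < n := lt_of_lt_of_le p.2 hcard
      have := hmom _ hpn
      simp only [hw, sub_mul, Finset.sum_sub_distrib]
      rw [key t lam htT, key t' lam' ht'T]
      linarith
    have := Matrix.eq_zero_of_forall_pow_sum_mul_pow_eq_zero hxinj h0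
    exact fun j => congrFun this j
  have hEq : ∀ j, (∑ i, if t i = x j then lam i else 0)
      = (∑ i, if t' i = x j then lam' i else 0) := by
    intro j
    exact sub_eq_zero.mp (by simpa [hw] using hwz j)
  have hτ : ∀ i0 : Fin r, ∃ i1 : Fin r, t i1 = t' i0 ∧ lam i1 = lam' i0 := by
    intro i0
    obtain ⟨j, hj⟩ := hsurj (t' i0) (ht'T i0)
    have hR : (∑ i, if t' i = x j then lam' i else 0) = lam' i0 := by
      rw [Finset.sum_eq_single i0]
      · simp [hj.symm]
      · intro i _ hi
        have : t' i ≠ x j := fun h => hi (ht' (by rw [h, hj]))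
        simp [this]
      · simp
    have hL := (hEq j).trans hR
    by_cases hex : ∃ i1, t i1 = x j
    · obtain ⟨i1, hi1⟩ := hex
      refine ⟨i1, by rw [hi1, hj], ?_⟩
      rw [← hL, Finset.sum_eq_single i1]
      · simp [hi1]
      · intro i _ hi
        have : t i ≠ x j := fun h => hi (ht (by rw [h, ← hi1]))
        simp [this]
      · simp
    · exfalso
      have : (∑ i, if t i = x j then lam i else 0) = 0 := by
        refine Finset.sum_eq_zero fun i _ => ?_
        have : t i ≠ x j := fun h => hex ⟨i, h⟩
        simp [this]
      rw [this] at hL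
      exact absurd hL.symm (ne_of_gt (hl' i0))
  choose τ hτ1 hτ2 using hτ
  have hτinj : Function.Injective τ := by
    intro a b hab
    apply ht'
    rw [← hτ1 a, ← hτ1 b, hab]
  have hτbij := Finite.injective_iff_bijective.mp hτinj
  refine ⟨(Equiv.ofBijective τ hτbij).symm, fun i => ?_⟩
  have : τ ((Equiv.ofBijective τ hτbij).symm i) = i :=
    (Equiv.ofBijective τ hτbij).apply_symm_apply i
  constructor
  · rw [← hτ1 ((Equiv.ofBijective τ hτbij).symm i), this]
  · rw [← hτ2 ((Equiv.ofBijective τ hτbij).symm i), this]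

/-- if `y_0 > 0`, `H₃(y) ⪰ 0`, `H₄(y) ⪰ 0` and `r = rank H₁(y)`, then
`y` has a unique `r`-atomic representing measure, whose support lies in `[0,1]`. -/
theorem stmt14 (s : ℕ) (y : ℕ → ℝ) (h0 : 0 < y 0)
    (h3 : (H3 s y).PosSemidef) (h4 : (H4 s y).PosSemidef)
    (r : ℕ) (hr : r = (H1 s y).rank) :
    ∃ t lam : Fin r → ℝ,
      Function.Injective t ∧ (∀ i, 0 < lam i) ∧ (∀ i, t i ∈ Set.Icc (0 : ℝ) 1) ∧
      (∀ k ≤ 2 * s + 1, y k = ∑ i, lam i * t i ^ k) ∧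
      ∀ t' lam' : Fin r → ℝ,
        Function.Injective t' → (∀ i, 0 < lam' i) →
        (∀ k ≤ 2 * s + 1, y k = ∑ i, lam' i * t' i ^ k) →
        ∃ σ : Equiv.Perm (Fin r), ∀ i, t' (σ i) = t i ∧ lam' (σ i) = lam i := by
  obtain ⟨t, lam, htinj, hlam, hIcc, hmom⟩ := momrep s r y h3 h4 hr
  refine ⟨t, lam, htinj, hlam, hIcc, hmom, ?_⟩
  intro t' lam' ht'inj hl' hmom'
  have hrle : r ≤ s + 1 := by
    rw [hr]
    exact le_trans (Matrix.rank_le_card_width _) (le_of_eq (Fintype.card_fin _))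
  exact mom_unique (n := 2 * s + 2) (by omega) t lam t' lam' htinj ht'inj hlam hl'
    (fun k hk => by rw [← hmom k (by omega), ← hmom' k (by omega)])
end
end

section
/- Let y = (y_0,...,y_{2s}) with y_0 > 0 admit a representing measure supported in [0,1], and suppose rank H_1(y) = s+1 where H_1(y) = (y_{i+j})_{0≤i,j≤s}. Define l and u as the minimal and maximal t ∈ R such that the extended sequence (y_0,...,y_{2s},t) admits a representing measure in [0,1]. Then the (s+1)-atomic representing measure of y supported in [0,1] is unique if and only if l = u. -/
open Matrix MeasureTheory Set

noncomputable section

section Stmt17AuxSection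
open Polynomial

namespace Stmt17Aux

def LF (s : ℕ) (y : ℕ → ℝ) (p : ℝ[X]) : ℝ :=
  ∑ k ∈ Finset.range (2 * s + 1), p.coeff k * y k

lemma LF_add (s : ℕ) (y : ℕ → ℝ) (p q : ℝ[X]) : LF s y (p + q) = LF s y p + LF s y q := by
  simp [LF, add_mul, Finset.sum_add_distrib]

lemma LF_sum (s : ℕ) (y : ℕ → ℝ) {ι : Type*} (A : Finset ι) (f : ι → ℝ[X]) :
    LF s y (∑ i ∈ A, f i) = ∑ i ∈ A, LF s y (f i) := by
  simp only [LF, finset_sum_coeff, Finset.sum_mul]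
  rw [Finset.sum_comm]

lemma LF_C_mul (s : ℕ) (y : ℕ → ℝ) (a : ℝ) (p : ℝ[X]) :
    LF s y (C a * p) = a * LF s y p := by
  simp [LF, coeff_C_mul, mul_assoc, Finset.mul_sum]

lemma LF_neg (s : ℕ) (y : ℕ → ℝ) (p : ℝ[X]) : LF s y (-p) = - LF s y p := by
  simp [LF, Finset.sum_neg_distrib]

lemma LF_sub (s : ℕ) (y : ℕ → ℝ) (p q : ℝ[X]) : LF s y (p - q) = LF s y p - LF s y q := by
  simp [LF, sub_mul, Finset.sum_sub_distrib]

lemma LF_X_pow (s : ℕ) (y : ℕ → ℝ) (n : ℕ) (hn : n ≤ 2 * s) :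
    LF s y ((X : ℝ[X]) ^ n) = y n := by
  simp only [LF, coeff_X_pow]
  rw [Finset.sum_eq_single n]
  · simp
  · intro b _ hb; rw [if_neg (by omega : ¬ b = n)]; ring
  · intro h; exact absurd (Finset.mem_range.mpr (by omega)) h


def vecPoly (n : ℕ) (c : Fin n → ℝ) : ℝ[X] := ∑ i : Fin n, C (c i) * X ^ (i : ℕ)

lemma vecPoly_eval (n : ℕ) (c : Fin n → ℝ) (x : ℝ) :
    (vecPoly n c).eval x = ∑ i, c i * x ^ (i : ℕ) := by
  simp [vecPoly, eval_finset_sum]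


lemma vecPoly_coeff (n : ℕ) (c : Fin n → ℝ) (i : Fin n) :
    (vecPoly n c).coeff (i : ℕ) = c i := by
  simp only [vecPoly, finset_sum_coeff, coeff_C_mul, coeff_X_pow]
  rw [Finset.sum_eq_single i]
  · simp
  · intro j _ hj
    rw [if_neg (fun h => hj (Fin.val_injective h.symm))]
    ring
  · intro h; exact absurd (Finset.mem_univ i) h

lemma vecPoly_coeff_self (q : ℝ[X]) (n : ℕ) (h : q.natDegree < n) :
    vecPoly n (fun i => q.coeff i) = q := by
  conv_rhs => rw [q.as_sum_range' n h]
  rw [vecPoly, Fin.sum_univ_eq_sum_range (fun i => C (q.coeff i) * X ^ i)]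
  simp [C_mul_X_pow_eq_monomial]

section Measure

variable {s : ℕ} {y : ℕ → ℝ} {μ : Measure ℝ}

lemma ae_mem_Icc (hc : μ (Icc (0:ℝ) 1)ᶜ = 0) : ∀ᵐ x ∂μ, x ∈ Icc (0:ℝ) 1 := by
  rw [ae_iff]
  simpa [compl_def] using hc

lemma integrable_eval [IsFiniteMeasure μ] (hc : μ (Icc (0:ℝ) 1)ᶜ = 0) (p : ℝ[X]) :
    Integrable (fun x => p.eval x) μ := by
  obtain ⟨M, hM⟩ := (isCompact_Icc : IsCompact (Icc (0:ℝ) 1)).exists_bound_of_continuousOn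
    (p.continuous_aeval.continuousOn)
  exact (integrable_const M).mono' p.continuous_aeval.aestronglyMeasurable
    ((ae_mem_Icc hc).mono fun x hx => by simpa using hM x hx)

lemma LF_eq_integral [IsFiniteMeasure μ] (hc : μ (Icc (0:ℝ) 1)ᶜ = 0)
    (hm : ∀ k ≤ 2 * s, y k = ∫ x, x ^ k ∂μ) (p : ℝ[X]) (hdeg : p.natDegree ≤ 2 * s) :
    LF s y p = ∫ x, p.eval x ∂μ := by
  have heval : ∀ x : ℝ, p.eval x = ∑ k ∈ Finset.range (2 * s + 1), p.coeff k * x ^ k :=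
    fun x => eval_eq_sum_range' (by omega) x
  have hint : ∀ k : ℕ, Integrable (fun x : ℝ => p.coeff k * x ^ k) μ := by
    intro k
    have := (integrable_eval hc ((X : ℝ[X]) ^ k)).const_mul (p.coeff k)
    simpa using this
  calc LF s y p = ∑ k ∈ Finset.range (2 * s + 1), ∫ x, p.coeff k * x ^ k ∂μ := by
        refine Finset.sum_congr rfl fun k hk => ?_
        rw [integral_const_mul, ← hm k (by simpa [Nat.lt_succ_iff] using hk)]
    _ = ∫ x, ∑ k ∈ Finset.range (2 * s + 1), p.coeff k * x ^ k ∂μ :=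
        (integral_finset_sum _ fun k _ => hint k).symm
    _ = ∫ x, p.eval x ∂μ := by simp_rw [← heval]

lemma LF_nonneg [IsFiniteMeasure μ] (hc : μ (Icc (0:ℝ) 1)ᶜ = 0)
    (hm : ∀ k ≤ 2 * s, y k = ∫ x, x ^ k ∂μ) (p : ℝ[X]) (hdeg : p.natDegree ≤ 2 * s)
    (hpos : ∀ x ∈ Icc (0:ℝ) 1, 0 ≤ p.eval x) : 0 ≤ LF s y p := by
  rw [LF_eq_integral hc hm p hdeg]
  exact integral_nonneg_of_ae ((ae_mem_Icc hc).mono fun x hx => hpos x hx)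

lemma eval_ae_zero [IsFiniteMeasure μ] (hc : μ (Icc (0:ℝ) 1)ᶜ = 0)
    (hm : ∀ k ≤ 2 * s, y k = ∫ x, x ^ k ∂μ) (p : ℝ[X]) (hdeg : p.natDegree ≤ 2 * s)
    (hpos : ∀ x ∈ Icc (0:ℝ) 1, 0 ≤ p.eval x) (hLz : LF s y p = 0) :
    ∀ᵐ x ∂μ, p.eval x = 0 := by
  have h0 : ∫ x, p.eval x ∂μ = 0 := by rw [← LF_eq_integral hc hm p hdeg]; exact hLz
  exact (integral_eq_zero_iff_of_nonneg_ae
    ((ae_mem_Icc hc).mono fun x hx => hpos x hx) (integrable_eval hc p)).mp h0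

lemma quad_H1 (c : Fin (s + 1) → ℝ) :
    c ⬝ᵥ (H1 s y).mulVec c = LF s y ((vecPoly (s + 1) c) ^ 2) := by
  rw [sq, vecPoly, Finset.sum_mul_sum]
  rw [LF_sum]
  simp only [dotProduct, mulVec, dotProduct, H1, Finset.mul_sum]
  refine Finset.sum_congr rfl fun i _ => ?_
  rw [LF_sum]
  refine Finset.sum_congr rfl fun j _ => ?_
  have : C (c i) * X ^ (i:ℕ) * (C (c j) * X ^ (j:ℕ)) = C (c i * c j) * X ^ ((i:ℕ)+(j:ℕ)) := by
    rw [mul_mul_mul_comm, ← C_mul, ← pow_add]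
  rw [this, LF_C_mul, LF_X_pow]
  · ring
  · omega


lemma vecPoly_natDegree_le (n : ℕ) (c : Fin n → ℝ) (m : ℕ) (h : ∀ i : Fin n, (i : ℕ) ≤ m) :
    (vecPoly n c).natDegree ≤ m := by
  refine natDegree_sum_le_of_forall_le _ _ fun i _ => ?_
  exact (natDegree_C_mul_le _ _).trans (by simpa using h i)

lemma H1_psd [IsFiniteMeasure μ] (hc : μ (Icc (0:ℝ) 1)ᶜ = 0)
    (hm : ∀ k ≤ 2 * s, y k = ∫ x, x ^ k ∂μ) : (H1 s y).PosSemidef := by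
  rw [Matrix.posSemidef_iff_dotProduct_mulVec]
  constructor
  · ext i j
    simp [Matrix.conjTranspose_apply, H1, Nat.add_comm]
  · intro c
    have hdeg : ((vecPoly (s+1) c) ^ 2).natDegree ≤ 2 * s := by
      refine (natDegree_pow _ _).le.trans ?_
      have := vecPoly_natDegree_le (s+1) c s (fun i => by omega)
      omega
    have := quad_H1 (s := s) (y := y) c
    rw [star_trivial]
    rw [this, LF_eq_integral hc hm _ hdeg]
    refine integral_nonneg fun x => ?_
    simp only [eval_pow]
    exact sq_nonneg _

lemma rank_lt_of_kernel {n : ℕ} (A : Matrix (Fin n) (Fin n) ℝ) (c : Fin n → ℝ) (hc : c ≠ 0)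
    (h : A.mulVec c = 0) : A.rank < n := by
  have hker : c ∈ LinearMap.ker A.mulVecLin := by
    simp [LinearMap.mem_ker, Matrix.mulVecLin_apply, h]
  have h1 : 0 < Module.finrank ℝ (LinearMap.ker A.mulVecLin) := by
    rw [Module.finrank_pos_iff_exists_ne_zero]
    exact ⟨⟨c, hker⟩, by simpa using hc⟩
  have h2 := LinearMap.finrank_range_add_finrank_ker A.mulVecLin
  have h3 : Module.finrank ℝ (Fin n → ℝ) = n := by simp
  rw [h3] at h2
  rw [Matrix.rank]
  omega

lemma star_lemma [IsFiniteMeasure μ] (hc : μ (Icc (0:ℝ) 1)ᶜ = 0)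
    (hm : ∀ k ≤ 2 * s, y k = ∫ x, x ^ k ∂μ) (hrank : (H1 s y).rank = s + 1)
    (p : ℝ[X]) (hdeg : p.natDegree ≤ 2 * s) (hpos : ∀ x ∈ Icc (0:ℝ) 1, 0 ≤ p.eval x)
    (hLz : LF s y p = 0) (S : Finset ℝ) (hcard : S.card ≤ s)
    (hzero : ∀ x ∈ Icc (0:ℝ) 1, p.eval x = 0 → x ∈ S) : False := by
  set q : ℝ[X] := ∏ z ∈ S, (X - C z) with hq
  have hqm : q.Monic := monic_prod_of_monic _ _ fun z _ => monic_X_sub_C z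
  have hqd : q.natDegree = S.card := by
    rw [hq, natDegree_prod _ _ fun z _ => X_sub_C_ne_zero z]
    simp
  have hqz : ∀ᵐ x ∂μ, q.eval x = 0 := by
    filter_upwards [ae_mem_Icc hc, eval_ae_zero hc hm p hdeg hpos hLz] with x hx hpx
    rw [hq, eval_prod]
    exact Finset.prod_eq_zero (hzero x hx hpx) (by simp)
  set c : Fin (s+1) → ℝ := fun i => q.coeff i with hcdef
  have hvp : vecPoly (s+1) c = q := vecPoly_coeff_self q (s+1) (by omega)
  have hq2deg : (q ^ 2).natDegree ≤ 2 * s := by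
    refine (natDegree_pow _ _).le.trans (by omega)
  have hquad : c ⬝ᵥ (H1 s y).mulVec c = 0 := by
    rw [quad_H1, hvp, LF_eq_integral hc hm _ hq2deg]
    rw [integral_eq_zero_iff_of_nonneg_ae]
    · filter_upwards [hqz] with x hx
      simp [eval_pow, hx]
    · refine Filter.Eventually.of_forall fun x => ?_
      simp only [eval_pow, Pi.zero_apply]
      exact sq_nonneg _
    · exact integrable_eval hc _
  have hker : (H1 s y).mulVec c = 0 :=
    ((H1_psd hc hm).dotProduct_mulVec_zero_iff c).mp (by simpa using hquad)
  have hcne : c ≠ 0 := by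
    intro h0
    have h1 := congrFun h0 ⟨q.natDegree, by omega⟩
    simp only [hcdef, Pi.zero_apply] at h1
    rw [coeff_natDegree] at h1
    exact one_ne_zero (hqm.leadingCoeff ▸ h1)
  exact absurd hrank (Nat.ne_of_lt (rank_lt_of_kernel _ c hcne hker))


end Measure


section Construct

variable {s : ℕ} {y : ℕ → ℝ} {μ : Measure ℝ} [IsFiniteMeasure μ]

/-- expansion of the weighted quadratic form -/
lemma LF_mul_vecPoly_sq (W : ℝ[X]) (n : ℕ) (d : Fin n → ℝ) :
    LF s y (W * (vecPoly n d) ^ 2) =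
      ∑ i, ∑ j, d i * d j * LF s y (W * X ^ ((i : ℕ) + (j : ℕ))) := by
  rw [sq, vecPoly, Finset.sum_mul_sum]
  rw [Finset.mul_sum, LF_sum]
  refine Finset.sum_congr rfl fun i _ => ?_
  rw [Finset.mul_sum, LF_sum]
  refine Finset.sum_congr rfl fun j _ => ?_
  have h : W * (C (d i) * X ^ (i:ℕ) * (C (d j) * X ^ (j:ℕ)))
      = C (d i * d j) * (W * X ^ ((i:ℕ) + (j:ℕ))) := by
    rw [C_mul]; ring
  rw [h, LF_C_mul]

variable (hc : μ (Icc (0:ℝ) 1)ᶜ = 0) (hm : ∀ k ≤ 2 * s, y k = ∫ x, x ^ k ∂μ)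
  (hrank : (H1 s y).rank = s + 1)
  (w₀ ε : ℝ) (hw₀ : w₀ ∈ Icc (0:ℝ) 1) (hε : ε = 1 ∨ ε = -1)
  (hsign : ∀ x ∈ Icc (0:ℝ) 1, 0 ≤ ε * (x - w₀))

include hc hm hrank hw₀ hε hsign

lemma LWq_pos (q : ℝ[X]) (hq : q ≠ 0) (hqd : q.natDegree + 1 ≤ s) :
    0 < LF s y (C ε * (X - C w₀) * q ^ 2) := by
  have hdeg : (C ε * (X - C w₀) * q ^ 2).natDegree ≤ 2 * s := by
    refine (natDegree_mul_le).trans ?_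
    have h1 : (C ε * (X - C w₀)).natDegree ≤ 1 :=
      (natDegree_mul_le).trans (by simp [natDegree_X_sub_C])
    have h2 : (q ^ 2).natDegree ≤ 2 * (s - 1) := by
      refine (natDegree_pow _ _).le.trans (by omega)
    omega
  have hpos : ∀ x ∈ Icc (0:ℝ) 1, 0 ≤ (C ε * (X - C w₀) * q ^ 2).eval x := by
    intro x hx
    simp only [eval_mul, eval_C, eval_sub, eval_X, eval_pow]
    exact mul_nonneg (hsign x hx) (sq_nonneg _)
  rcases (LF_nonneg hc hm _ hdeg hpos).lt_or_eq with h | h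
  · exact h
  exfalso
  have hεne : ε ≠ 0 := by rcases hε with h' | h' <;> simp [h']
  refine star_lemma hc hm hrank _ hdeg hpos h.symm
    (insert w₀ q.roots.toFinset) ?_ ?_
  · have := q.card_roots'
    calc (insert w₀ q.roots.toFinset).card ≤ q.roots.toFinset.card + 1 :=
          Finset.card_insert_le _ _
    _ ≤ Multiset.card q.roots + 1 := by
          have := q.roots.toFinset_card_le; omega
    _ ≤ s := by omega
  · intro x hx hx0
    simp only [eval_mul, eval_C, eval_sub, eval_X, eval_pow] at hx0
    rcases mul_eq_zero.mp hx0 with h' | h'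
    · rcases mul_eq_zero.mp h' with h'' | h''
      · exact absurd h'' hεne
      · have hxw : x = w₀ := by linarith
        simp [Finset.mem_insert, hxw]
    · have : q.eval x = 0 := by
        have := sq_eq_zero_iff.mp h'; exact this
      simp [Finset.mem_insert, Multiset.mem_toFinset, mem_roots', hq, this, IsRoot]

lemma exists_g : ∃ g : ℝ[X], g.Monic ∧ g.natDegree = s ∧
    ∀ q : ℝ[X], (q.natDegree + 1 ≤ s ∨ q = 0) →
      LF s y (C ε * (X - C w₀) * (q * g)) = 0 := by
  classical
  set W : ℝ[X] := C ε * (X - C w₀) with hW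
  set B : Matrix (Fin s) (Fin s) ℝ := fun i j => LF s y (W * X ^ ((i:ℕ)+(j:ℕ))) with hB
  set wv : Fin s → ℝ := fun i => LF s y (W * X ^ ((i:ℕ) + s)) with hwv
  have hBpd : B.PosDef := by
    rw [Matrix.posDef_iff_dotProduct_mulVec]
    constructor
    · ext i j; rw [Matrix.conjTranspose_apply]; simp [hB, Nat.add_comm]
    · intro d hd
      rw [star_trivial]
      have hform : d ⬝ᵥ B.mulVec d = LF s y (W * (vecPoly s d) ^ 2) := by
        rw [LF_mul_vecPoly_sq]
        simp only [dotProduct, mulVec, dotProduct, hB, Finset.mul_sum]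
        refine Finset.sum_congr rfl fun i _ => Finset.sum_congr rfl fun j _ => by ring
      rw [hform]
      have hvne : vecPoly s d ≠ 0 := by
        intro h0
        apply hd
        funext i
        have := congrArg (fun p => Polynomial.coeff p (i : ℕ)) h0
        simpa [vecPoly_coeff] using this
      have hs0 : 1 ≤ s := by
        rcases Nat.eq_zero_or_pos s with h' | h'
        · exfalso; apply hd; funext i; exact absurd i.2 (by omega)
        · exact h'
      have hvd : (vecPoly s d).natDegree + 1 ≤ s := by
        have := vecPoly_natDegree_le s d (s - 1) (fun i => by omega)
        omega
      exact LWq_pos hc hm hrank w₀ ε hw₀ hε hsign _ hvne hvd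
  have hBdet : IsUnit B.det := isUnit_iff_ne_zero.mpr (ne_of_gt hBpd.det_pos)
  set a : Fin s → ℝ := -(B⁻¹.mulVec wv) with ha
  have hBa : B.mulVec a = -wv := by
    rw [ha, Matrix.mulVec_neg, Matrix.mulVec_mulVec, Matrix.mul_nonsing_inv _ hBdet,
      Matrix.one_mulVec]
  set g : ℝ[X] := X ^ s + vecPoly s a with hg
  have hvdeg : (vecPoly s a).degree < (s : WithBot ℕ) := by
    rcases eq_or_ne (vecPoly s a) 0 with h0 | h0
    · rw [h0, degree_zero]; exact WithBot.bot_lt_coe _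
    · have hs0 : 1 ≤ s := by
        by_contra h'
        have : s = 0 := by omega
        subst this
        exact h0 (by simp [vecPoly])
      have h1 := vecPoly_natDegree_le s a (s - 1) (fun i => by omega)
      calc (vecPoly s a).degree ≤ ((vecPoly s a).natDegree : WithBot ℕ) := degree_le_natDegree
      _ < (s : WithBot ℕ) := by exact_mod_cast Nat.lt_of_lt_of_le (by omega) le_rfl
  have hgm : g.Monic := monic_X_pow_add (by exact_mod_cast hvdeg)
  have hgd : g.natDegree = s := by
    have hdg : g.degree = (s : WithBot ℕ) := by
      rw [hg, add_comm, degree_add_eq_right_of_degree_lt (by simpa [degree_X_pow] using hvdeg),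
        degree_X_pow]
    exact natDegree_eq_of_degree_eq_some hdg
  refine ⟨g, hgm, hgd, ?_⟩
  have horth : ∀ k : ℕ, k + 1 ≤ s → LF s y (W * (X ^ k * g)) = 0 := by
    intro k hk
    have hexp : W * (X ^ k * g) =
        W * X ^ (k + s) + ∑ i : Fin s, C (a i) * (W * X ^ (k + (i:ℕ))) := by
      calc W * (X ^ k * g) = W * X ^ (k + s) + W * (X ^ k * vecPoly s a) := by
            rw [hg, pow_add]; ring
      _ = W * X ^ (k + s) + ∑ i : Fin s, C (a i) * (W * X ^ (k + (i:ℕ))) := by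
            congr 1
            rw [vecPoly, Finset.mul_sum, Finset.mul_sum]
            refine Finset.sum_congr rfl fun i _ => by rw [pow_add]; ring
    rw [hexp, LF_add, LF_sum]
    have hterm : ∀ i : Fin s, LF s y (C (a i) * (W * X ^ (k + (i:ℕ))))
        = B ⟨k, by omega⟩ i * a i := by
      intro i
      rw [LF_C_mul, hB]
      show a i * LF s y (W * X ^ ((k:ℕ) + (i:ℕ))) = _
      ring
    rw [Finset.sum_congr rfl fun i _ => hterm i]
    have : ∑ i, B ⟨k, by omega⟩ i * a i = (B.mulVec a) ⟨k, by omega⟩ := rfl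
    rw [this, hBa]
    have : LF s y (W * X ^ (k + s)) = wv ⟨k, by omega⟩ := rfl
    rw [this]
    simp
  intro q hq
  rcases hq with hqd | rfl
  · have hqs : q = ∑ k ∈ Finset.range s, C (q.coeff k) * X ^ k := by
      conv_lhs => rw [q.as_sum_range' s (by omega)]
      refine Finset.sum_congr rfl fun k _ => ?_
      rw [C_mul_X_pow_eq_monomial]
    calc LF s y (W * (q * g))
        = LF s y (∑ k ∈ Finset.range s, C (q.coeff k) * (W * (X ^ k * g))) := by
          congr 1
          conv_lhs => rw [hqs]
          rw [Finset.sum_mul, Finset.mul_sum]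
          refine Finset.sum_congr rfl fun k _ => by ring
    _ = ∑ k ∈ Finset.range s, q.coeff k * LF s y (W * (X ^ k * g)) := by
          rw [LF_sum]
          exact Finset.sum_congr rfl fun k _ => LF_C_mul _ _ _ _
    _ = 0 := by
          refine Finset.sum_eq_zero fun k hk => ?_
          rw [horth k (by simpa using Finset.mem_range.mp hk)]
          ring
  · simp [LF]

lemma exists_r (g : ℝ[X]) (hgm : g.Monic) (hgd : g.natDegree = s)
    (horth : ∀ q : ℝ[X], (q.natDegree + 1 ≤ s ∨ q = 0) →
      LF s y (C ε * (X - C w₀) * (q * g)) = 0) :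
    ∃ r : Fin s → ℝ, Function.Injective r ∧ (∀ i, r i ∈ Icc (0:ℝ) 1) ∧ (∀ i, r i ≠ w₀) ∧
      g = ∏ i, (X - C (r i)) := by
  classical
  have hεne : ε ≠ 0 := by rcases hε with h | h <;> simp [h]
  have hgne : g ≠ 0 := hgm.ne_zero
  obtain ⟨q, hPq, hcardq, hqroots⟩ := g.exists_prod_multiset_X_sub_C_mul
  set P : ℝ[X] := (g.roots.map fun a => X - C a).prod with hP
  have hPm : P.Monic := monic_multiset_prod_of_monic _ _ fun a _ => monic_X_sub_C a
  have hPne : P ≠ 0 := hPm.ne_zero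
  have hqne : q ≠ 0 := by rintro rfl; rw [mul_zero] at hPq; exact hgne hPq.symm
  have hqm : q.Monic := hPm.of_mul_monic_left (hPq.symm ▸ hgm)
  have hPdeg : P.natDegree = Multiset.card g.roots :=
    natDegree_multiset_prod_X_sub_C_eq_card _
  have hPeval : ∀ x : ℝ, P.eval x = (g.roots.map fun a => x - a).prod := by
    intro x; rw [hP, eval_multiset_prod, Multiset.map_map]; simp
  have hPzero : ∀ x : ℝ, P.eval x = 0 → x ∈ g.roots.toFinset := by
    intro x hx
    rw [hPeval, Multiset.prod_eq_zero_iff] at hx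
    obtain ⟨a, ha, hxa⟩ := Multiset.mem_map.mp hx
    rw [Multiset.mem_toFinset]
    have : x = a := by linarith [sub_eq_zero.mp hxa]
    rwa [this]
  have hgev : ∀ x : ℝ, g.eval x = P.eval x * q.eval x := by
    intro x; rw [← hPq, eval_mul]
  -- Claim A : q is trivial
  have hq0 : q.natDegree = 0 := by
    by_contra hqd0
    have hqd1 : 1 ≤ q.natDegree := Nat.one_le_iff_ne_zero.mpr hqd0
    have hqnr : ∀ x : ℝ, q.eval x ≠ 0 := by
      intro x hx
      have hxq : x ∈ q.roots := mem_roots'.mpr ⟨hqne, hx⟩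
      rw [hqroots] at hxq; exact Multiset.notMem_zero x hxq
    have hqpos : ∀ x : ℝ, 0 < q.eval x := by
      have htend := Polynomial.tendsto_atTop_of_leadingCoeff_nonneg q
        (natDegree_pos_iff_degree_pos.mp (by omega))
        (by rw [Monic.leadingCoeff hqm]; norm_num)
      obtain ⟨x₀, hx₀⟩ := (htend.eventually_ge_atTop 1).exists
      intro x
      rcases lt_trichotomy (q.eval x) 0 with h | h | h
      · exfalso
        rcases le_total x x₀ with hle | hle
        · obtain ⟨z, _, hz0⟩ := intermediate_value_Icc hle
            ((q.continuous_aeval).continuousOn) (by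
              constructor <;> [linarith; linarith] :
              (0:ℝ) ∈ Icc (q.eval x) (q.eval x₀))
          exact hqnr z hz0
        · obtain ⟨z, _, hz0⟩ := intermediate_value_Icc' hle
            ((q.continuous_aeval).continuousOn) (by
              constructor <;> [linarith; linarith] : (0:ℝ) ∈ Icc (q.eval x) (q.eval x₀))
          exact hqnr z hz0
      · exact absurd h (hqnr x)
      · exact h
    have hPd1 : P.natDegree + 1 ≤ s := by omega
    set p : ℝ[X] := C ε * (X - C w₀) * (P * g) with hp
    have hLp : LF s y p = 0 := horth P (Or.inl hPd1)
    have hpdeg : p.natDegree ≤ 2 * s := by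
      refine natDegree_mul_le.trans ?_
      have h1 : (C ε * (X - C w₀)).natDegree ≤ 1 :=
        natDegree_mul_le.trans (by simp [natDegree_X_sub_C])
      have h2 : (P * g).natDegree ≤ P.natDegree + g.natDegree := natDegree_mul_le
      omega
    have hpev : ∀ x : ℝ, p.eval x = (ε * (x - w₀)) * ((P.eval x)^2 * q.eval x) := by
      intro x
      simp only [hp, eval_mul, eval_C, eval_sub, eval_X, hgev]
      ring
    have hppos : ∀ x ∈ Icc (0:ℝ) 1, 0 ≤ p.eval x := by
      intro x hx
      rw [hpev]
      exact mul_nonneg (hsign x hx) (mul_nonneg (sq_nonneg _) (hqpos x).le)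
    refine star_lemma hc hm hrank p hpdeg hppos hLp (insert w₀ g.roots.toFinset) ?_ ?_
    · have h1 := g.roots.toFinset_card_le
      have h2 := Finset.card_insert_le w₀ g.roots.toFinset
      omega
    · intro x hx hx0
      rw [hpev] at hx0
      rcases mul_eq_zero.mp hx0 with h' | h'
      · rcases mul_eq_zero.mp h' with h'' | h''
        · exact absurd h'' hεne
        · have : x = w₀ := by linarith
          simp [this]
      · rcases mul_eq_zero.mp h' with h'' | h''
        · exact Finset.mem_insert_of_mem (hPzero x (by
            have := sq_eq_zero_iff.mp h''; exact this))
        · exact absurd h'' (hqnr x)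
  have hq1 : q = 1 := hqm.natDegree_eq_zero.mp hq0
  have hgP : g = P := by rw [← hPq, hq1, mul_one]
  have hcard : Multiset.card g.roots = s := by omega
  -- Claim B : roots in [0,1] \ {w₀}
  have hroots_mem : ∀ ρ ∈ g.roots, ρ ∈ Icc (0:ℝ) 1 ∧ ρ ≠ w₀ := by
    intro ρ hρ
    obtain ⟨h, hh⟩ := dvd_iff_isRoot.mpr (isRoot_of_mem_roots hρ)
    have hhne : h ≠ 0 := by rintro rfl; rw [mul_zero] at hh; exact hgne hh
    have hhd : h.natDegree + 1 = s := by
      have h2 := natDegree_mul (X_sub_C_ne_zero ρ) hhne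
      rw [← hh, natDegree_X_sub_C] at h2
      omega
    have hhevg : ∀ x : ℝ, g.eval x = (x - ρ) * h.eval x := by
      intro x; rw [hh, eval_mul, eval_sub, eval_X, eval_C]
    have hSh : (insert w₀ h.roots.toFinset).card ≤ s := by
      have h1 := h.roots.toFinset_card_le
      have h2 := h.card_roots'
      have h3 := Finset.card_insert_le w₀ h.roots.toFinset
      omega
    by_cases hρI : ρ ∈ Icc (0:ℝ) 1
    · refine ⟨hρI, ?_⟩
      intro hρw
      subst hρw
      set p : ℝ[X] := ((X - C ρ) * h)^2 with hp
      have hLp : LF s y p = 0 := by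
        have e2 := horth h (Or.inl (by omega))
        have e1 : C ε * (X - C ρ) * (h * g) = C ε * p := by rw [hh, hp]; ring
        rw [e1, LF_C_mul] at e2
        rcases mul_eq_zero.mp e2 with h' | h'
        · exact absurd h' hεne
        · exact h'
      have hpev : ∀ x : ℝ, p.eval x = ((x - ρ) * h.eval x)^2 := by
        intro x; rw [hp, eval_pow, eval_mul, eval_sub, eval_X, eval_C]
      have hpdeg : p.natDegree ≤ 2 * s := by
        have h1 : ((X - C ρ) * h).natDegree ≤ 1 + h.natDegree :=
          natDegree_mul_le.trans (by simp [natDegree_X_sub_C])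
        refine (natDegree_pow _ _).le.trans ?_
        omega
      refine star_lemma hc hm hrank p hpdeg (fun x _ => by rw [hpev]; exact sq_nonneg _)
        hLp (insert ρ h.roots.toFinset) hSh ?_
      intro x hx hx0
      rw [hpev] at hx0
      rcases mul_eq_zero.mp (sq_eq_zero_iff.mp hx0) with h' | h'
      · have : x = ρ := by linarith
        simp [this]
      · simp [Finset.mem_insert, Multiset.mem_toFinset, mem_roots', hhne, h', IsRoot]
    · exfalso
      have hρI' : ρ < 0 ∨ 1 < ρ := by
        rcases lt_or_ge ρ 0 with h' | h'
        · exact Or.inl h'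
        · right; by_contra h''; exact hρI ⟨h', by linarith⟩
      have hLgh := horth h (Or.inl (by omega))
      rcases hρI' with hρ0 | hρ1
      · set p : ℝ[X] := C ε * (X - C w₀) * (h * g) with hp
        have hpev : ∀ x : ℝ, p.eval x = (ε * (x - w₀)) * ((x - ρ) * (h.eval x)^2) := by
          intro x
          simp only [hp, eval_mul, eval_C, eval_sub, eval_X, hhevg]
          ring
        have hpdeg : p.natDegree ≤ 2 * s := by
          refine natDegree_mul_le.trans ?_
          have h1 : (C ε * (X - C w₀)).natDegree ≤ 1 :=
            natDegree_mul_le.trans (by simp [natDegree_X_sub_C])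
          have h2 : (h * g).natDegree ≤ h.natDegree + g.natDegree := natDegree_mul_le
          omega
        refine star_lemma hc hm hrank p hpdeg ?_ hLgh (insert w₀ h.roots.toFinset) hSh ?_
        · intro x hx
          rw [hpev]
          refine mul_nonneg (hsign x hx) (mul_nonneg ?_ (sq_nonneg _))
          have := hx.1; linarith
        · intro x hx hx0
          rw [hpev] at hx0
          rcases mul_eq_zero.mp hx0 with h' | h'
          · rcases mul_eq_zero.mp h' with h'' | h''
            · exact absurd h'' hεne
            · have : x = w₀ := by linarith
              simp [this]
          · rcases mul_eq_zero.mp h' with h'' | h''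
            · exfalso; have := hx.1; linarith [sub_eq_zero.mp h'']
            · have hhx : h.eval x = 0 := sq_eq_zero_iff.mp h''
              simp [Finset.mem_insert, Multiset.mem_toFinset, mem_roots', hhne, hhx, IsRoot]
      · set p : ℝ[X] := -(C ε * (X - C w₀) * (h * g)) with hp
        have hLp : LF s y p = 0 := by rw [hp, LF_neg, hLgh, neg_zero]
        have hpev : ∀ x : ℝ, p.eval x = (ε * (x - w₀)) * ((ρ - x) * (h.eval x)^2) := by
          intro x
          simp only [hp, eval_neg, eval_mul, eval_C, eval_sub, eval_X, hhevg]
          ring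
        have hpdeg : p.natDegree ≤ 2 * s := by
          rw [hp, natDegree_neg]
          refine natDegree_mul_le.trans ?_
          have h1 : (C ε * (X - C w₀)).natDegree ≤ 1 :=
            natDegree_mul_le.trans (by simp [natDegree_X_sub_C])
          have h2 : (h * g).natDegree ≤ h.natDegree + g.natDegree := natDegree_mul_le
          omega
        refine star_lemma hc hm hrank p hpdeg ?_ hLp (insert w₀ h.roots.toFinset) hSh ?_
        · intro x hx
          rw [hpev]
          refine mul_nonneg (hsign x hx) (mul_nonneg ?_ (sq_nonneg _))
          have := hx.2; linarith
        · intro x hx hx0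
          rw [hpev] at hx0
          rcases mul_eq_zero.mp hx0 with h' | h'
          · rcases mul_eq_zero.mp h' with h'' | h''
            · exact absurd h'' hεne
            · have : x = w₀ := by linarith
              simp [this]
          · rcases mul_eq_zero.mp h' with h'' | h''
            · exfalso; have := hx.2; linarith
            · have hhx : h.eval x = 0 := sq_eq_zero_iff.mp h''
              simp [Finset.mem_insert, Multiset.mem_toFinset, mem_roots', hhne, hhx, IsRoot]
  -- Claim C : simple roots
  have hnodup : g.roots.Nodup := by
    rw [Multiset.nodup_iff_count_le_one]
    by_contra hcnt
    push_neg at hcnt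
    obtain ⟨ρ, hρ2⟩ := hcnt
    have hdvd : (X - C ρ)^2 ∣ g := by
      have h1 : (2:ℕ) ≤ rootMultiplicity ρ g := by rw [← count_roots]; omega
      exact (pow_dvd_pow _ h1).trans (pow_rootMultiplicity_dvd g ρ)
    obtain ⟨h, hh⟩ := hdvd
    have hhne : h ≠ 0 := by rintro rfl; rw [mul_zero] at hh; exact hgne hh
    have hhd : h.natDegree + 2 = s := by
      have h2 := natDegree_mul (pow_ne_zero 2 (X_sub_C_ne_zero ρ)) hhne
      rw [← hh, natDegree_pow, natDegree_X_sub_C] at h2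
      omega
    have hLgh := horth h (Or.inl (by omega))
    set p : ℝ[X] := C ε * (X - C w₀) * (h * g) with hp
    have hpev : ∀ x : ℝ, p.eval x = (ε * (x - w₀)) * ((x - ρ)^2 * (h.eval x)^2) := by
      intro x
      simp only [hp, hh, eval_mul, eval_C, eval_sub, eval_X, eval_pow]
      ring
    have hpdeg : p.natDegree ≤ 2 * s := by
      refine natDegree_mul_le.trans ?_
      have h1 : (C ε * (X - C w₀)).natDegree ≤ 1 :=
        natDegree_mul_le.trans (by simp [natDegree_X_sub_C])
      have h2 : (h * g).natDegree ≤ h.natDegree + g.natDegree := natDegree_mul_le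
      omega
    refine star_lemma hc hm hrank p hpdeg ?_ hLgh
      (insert w₀ (insert ρ h.roots.toFinset)) ?_ ?_
    · intro x hx
      rw [hpev]
      exact mul_nonneg (hsign x hx) (mul_nonneg (sq_nonneg _) (sq_nonneg _))
    · have h1 := h.roots.toFinset_card_le
      have h2 := h.card_roots'
      have h3 := Finset.card_insert_le ρ h.roots.toFinset
      have h4 := Finset.card_insert_le w₀ (insert ρ h.roots.toFinset)
      omega
    · intro x hx hx0
      rw [hpev] at hx0
      rcases mul_eq_zero.mp hx0 with h' | h'
      · rcases mul_eq_zero.mp h' with h'' | h''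
        · exact absurd h'' hεne
        · have : x = w₀ := by linarith
          simp [this]
      · rcases mul_eq_zero.mp h' with h'' | h''
        · have : x = ρ := by
            have := sq_eq_zero_iff.mp h''; linarith
          simp [this]
        · have hhx : h.eval x = 0 := sq_eq_zero_iff.mp h''
          simp [Finset.mem_insert, Multiset.mem_toFinset, mem_roots', hhne, hhx, IsRoot]
  -- packaging
  have hfcard : g.roots.toFinset.card = s := by
    rw [Multiset.toFinset_card_eq_card_iff_nodup.mpr hnodup]; exact hcard
  set e := g.roots.toFinset.orderIsoOfFin hfcard with he
  set r : Fin s → ℝ := fun i => (e i : ℝ) with hr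
  have hrinj : Function.Injective r := by
    intro i j hij
    exact e.injective (Subtype.ext hij)
  have hrmem : ∀ i, r i ∈ g.roots := fun i => Multiset.mem_toFinset.mp (e i).2
  refine ⟨r, hrinj, fun i => (hroots_mem _ (hrmem i)).1, fun i => (hroots_mem _ (hrmem i)).2, ?_⟩
  have hstep1 : g = ∏ a ∈ g.roots.toFinset, (X - C a) := by
    conv_lhs => rw [hgP, hP]
    rw [Finset.prod_eq_multiset_prod]
    congr 1
    rw [show g.roots.toFinset.val = g.roots.dedup from rfl, hnodup.dedup]
  rw [hstep1]
  rw [← Finset.prod_coe_sort (g.roots.toFinset) (fun a => X - C (a : ℝ))]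
  exact (Fintype.prod_equiv e.toEquiv _ _ (fun i => rfl)).symm

lemma construct :
    ∃ t lam c : Fin (s+1) → ℝ,
      Function.Injective t ∧ (∀ i, t i ∈ Icc (0:ℝ) 1) ∧ (∀ i, 0 < lam i) ∧
      (∀ k, k ≤ 2*s → y k = ∑ i, lam i * t i ^ k) ∧
      c ⟨s, Nat.lt_succ_self s⟩ = 1 ∧
      (∀ m, ε * (t m - w₀) * (∑ i, c i * t m ^ (i:ℕ))^2 = 0) := by
  classical
  have hεne : ε ≠ 0 := by rcases hε with h | h <;> simp [h]
  have hεε : ε * ε = 1 := by rcases hε with h | h <;> simp [h]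
  obtain ⟨g, hgm, hgd, horth⟩ := exists_g hc hm hrank w₀ ε hw₀ hε hsign
  obtain ⟨r, hrinj, hrIcc, hrw, hgprod⟩ :=
    exists_r hc hm hrank w₀ ε hw₀ hε hsign g hgm hgd horth
  set t : Fin (s+1) → ℝ := Fin.cons w₀ r with ht
  have ht0 : t 0 = w₀ := rfl
  have htsucc : ∀ i : Fin s, t i.succ = r i := fun i => by simp [ht]
  have htinj : Function.Injective t := by
    rw [ht, Fin.cons_injective_iff]
    exact ⟨by rintro ⟨i, hi⟩; exact hrw i hi, hrinj⟩
  have htIcc : ∀ i, t i ∈ Icc (0:ℝ) 1 := by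
    intro i
    refine Fin.cases ?_ ?_ i
    · exact hw₀
    · intro j; rw [htsucc]; exact hrIcc j
  have hgev : ∀ x : ℝ, g.eval x = ∏ i, (x - r i) := by
    intro x; rw [hgprod, eval_prod]; simp
  have hgr : ∀ i, g.eval (r i) = 0 := by
    intro i; rw [hgev]
    exact Finset.prod_eq_zero (Finset.mem_univ i) (sub_self _)
  have hgw₀ : g.eval w₀ ≠ 0 := by
    rw [hgev]
    refine Finset.prod_ne_zero_iff.mpr fun i _ => sub_ne_zero.mpr ?_
    exact fun h => hrw i h.symm
  -- nodes polynomial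
  set N : ℝ[X] := ∏ i : Fin (s+1), (X - C (t i)) with hN
  have hNm : N.Monic := monic_prod_of_monic _ _ fun i _ => monic_X_sub_C _
  have hNfact : N = (X - C w₀) * g := by
    have hstep : ∀ i : Fin s, X - C (t i.succ) = X - C (r i) := fun i => by rw [htsucc]
    rw [hN, Fin.prod_univ_succ, ht0, Finset.prod_congr rfl fun i _ => hstep i, hgprod]
  have hNdeg : N.natDegree = s + 1 := by
    rw [hN, natDegree_prod _ _ fun i _ => X_sub_C_ne_zero _]
    simp
  -- helper polynomials for the weights
  set gi : Fin s → ℝ[X] := fun i => ∏ j ∈ Finset.univ.erase i, (X - C (r j)) with hgi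
  set di : Fin s → ℝ := fun i => ∏ j ∈ Finset.univ.erase i, (r i - r j) with hdi
  have hgiev : ∀ (i : Fin s) (x : ℝ), (gi i).eval x = ∏ j ∈ Finset.univ.erase i, (x - r j) := by
    intro i x; rw [hgi, eval_prod]; simp
  have hdine : ∀ i, di i ≠ 0 := by
    intro i
    refine Finset.prod_ne_zero_iff.mpr fun j hj => sub_ne_zero.mpr ?_
    exact fun h => (Finset.mem_erase.mp hj).1 (hrinj h.symm)
  have hgii : ∀ i, (gi i).eval (r i) = di i := fun i => hgiev i (r i)
  have hgij : ∀ i j, j ≠ i → (gi i).eval (r j) = 0 := by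
    intro i j hji
    rw [hgiev]
    exact Finset.prod_eq_zero (Finset.mem_erase.mpr ⟨hji, Finset.mem_univ j⟩) (sub_self _)
  set α : Fin s → ℝ := fun i => ε * (r i - w₀) * (di i)^2 with hα
  have hαpos : ∀ i, 0 < α i := by
    intro i
    have h1 : 0 ≤ ε * (r i - w₀) := hsign _ (hrIcc i)
    have h2 : ε * (r i - w₀) ≠ 0 := mul_ne_zero hεne (sub_ne_zero.mpr (hrw i))
    have h3 := hdine i
    have h4 : 0 < ε * (r i - w₀) := h1.lt_of_ne (Ne.symm h2)
    positivity
  -- the weight polynomials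
  set w : Fin (s+1) → ℝ[X] := Fin.cons ((C (g.eval w₀)⁻¹ * g)^2)
      (fun i => C (α i)⁻¹ * (C ε * (X - C w₀)) * (gi i)^2) with hwdef
  have hw0 : w 0 = (C (g.eval w₀)⁻¹ * g)^2 := rfl
  have hwsucc : ∀ i : Fin s, w i.succ = C (α i)⁻¹ * (C ε * (X - C w₀)) * (gi i)^2 :=
    fun i => by simp [hwdef]
  have hgideg : ∀ i, (gi i).natDegree + 1 ≤ s := by
    intro i
    rw [hgi, natDegree_prod _ _ fun j _ => X_sub_C_ne_zero _]
    have h1 : (Finset.univ.erase i).card = s - 1 := by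
      rw [Finset.card_erase_of_mem (Finset.mem_univ i)]; simp
    have h2 : 1 ≤ s := by
      have := i.2; omega
    simp only [natDegree_X_sub_C]
    rw [Finset.sum_const, smul_eq_mul, mul_one, h1]
    omega
  have hwdeg : ∀ m, (w m).natDegree ≤ 2 * s := by
    intro m
    refine Fin.cases ?_ ?_ m
    · rw [hw0]
      refine (natDegree_pow _ _).le.trans ?_
      have h1 : (C (g.eval w₀)⁻¹ * g).natDegree ≤ s :=
        natDegree_mul_le.trans (by simp [natDegree_C, hgd])
      omega
    · intro i
      rw [hwsucc]
      refine natDegree_mul_le.trans ?_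
      have h1 : (C (α i)⁻¹ * (C ε * (X - C w₀))).natDegree ≤ 1 := by
        calc (C (α i)⁻¹ * (C ε * (X - C w₀))).natDegree
            ≤ (C (α i)⁻¹).natDegree + (C ε * (X - C w₀)).natDegree := natDegree_mul_le
        _ ≤ 0 + ((C ε).natDegree + (X - C w₀).natDegree) :=
            add_le_add (natDegree_C _).le natDegree_mul_le
        _ ≤ 1 := by simp [natDegree_C, natDegree_X_sub_C]
      have h2 : ((gi i)^2).natDegree ≤ 2 * (s-1) := by
        refine (natDegree_pow _ _).le.trans ?_
        have := hgideg i; omega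
      have h3 : 1 ≤ s := by have := i.2; omega
      omega
  have hwev0 : ∀ x : ℝ, (w 0).eval x = ((g.eval w₀)⁻¹ * g.eval x)^2 := by
    intro x; rw [hw0]; simp [eval_pow, eval_mul]
  have hwevs : ∀ (i : Fin s) (x : ℝ),
      (w i.succ).eval x = (α i)⁻¹ * (ε * (x - w₀)) * ((gi i).eval x)^2 := by
    intro i x
    rw [hwsucc]
    simp only [eval_mul, eval_pow, eval_C, eval_sub, eval_X]
  -- Kronecker property
  have hwkron : ∀ m m' : Fin (s+1), (w m).eval (t m') = if m' = m then 1 else 0 := by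
    intro m m'
    refine Fin.cases ?_ ?_ m
    · refine Fin.cases ?_ ?_ m'
      · rw [if_pos rfl, hwev0, ht0, inv_mul_cancel₀ hgw₀, one_pow]
      · intro j
        rw [if_neg (by simp [Fin.succ_ne_zero]), hwev0, htsucc, hgr, mul_zero]
        norm_num
    · intro i
      refine Fin.cases ?_ ?_ m'
      · rw [if_neg (by simp [(Fin.succ_ne_zero i).symm]), hwevs, ht0]
        simp
      · intro j
        rw [hwevs, htsucc]
        by_cases hji : j = i
        · subst hji
          have hαe : (α j)⁻¹ * (ε * (r j - w₀)) * ((di j))^2 = (α j)⁻¹ * α j := by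
            rw [hα]; ring
          rw [if_pos rfl, hgii, hαe, inv_mul_cancel₀ (hαpos j).ne']
        · rw [if_neg (by simpa [Fin.succ_inj] using hji), hgij i j hji]
          norm_num
  -- the weights
  set lam : Fin (s+1) → ℝ := fun m => LF s y (w m) with hlam
  have hwnonneg : ∀ m, ∀ x ∈ Icc (0:ℝ) 1, 0 ≤ (w m).eval x := by
    intro m x hx
    refine Fin.cases ?_ ?_ m
    · rw [hwev0]; exact sq_nonneg _
    · intro i
      rw [hwevs]
      exact mul_nonneg (mul_nonneg (inv_nonneg.mpr (hαpos i).le) (hsign x hx)) (sq_nonneg _)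
  have hlampos : ∀ m, 0 < lam m := by
    intro m
    have hnn := LF_nonneg hc hm _ (hwdeg m) (hwnonneg m)
    rcases hnn.lt_or_eq with h | h
    · exact h
    exfalso
    rcases Fin.eq_zero_or_eq_succ m with rfl | ⟨i, rfl⟩
    · refine star_lemma hc hm hrank _ (hwdeg 0) (hwnonneg 0) h.symm (Finset.univ.image r) ?_ ?_
      · exact Finset.card_image_le.trans (by simp)
      · intro x hx hx0
        rw [hwev0] at hx0
        have hgx : g.eval x = 0 := by
          rcases mul_eq_zero.mp (sq_eq_zero_iff.mp hx0) with h' | h'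
          · exact absurd h' (inv_ne_zero hgw₀)
          · exact h'
        rw [hgev] at hgx
        obtain ⟨i, _, hi⟩ := Finset.prod_eq_zero_iff.mp hgx
        exact Finset.mem_image.mpr ⟨i, Finset.mem_univ i, by linarith⟩
    · refine star_lemma hc hm hrank _ (hwdeg i.succ) (hwnonneg i.succ) h.symm
        (insert w₀ ((Finset.univ.erase i).image r)) ?_ ?_
      · have h1 : ((Finset.univ.erase i).image r).card ≤ s - 1 :=
          Finset.card_image_le.trans
            (by rw [Finset.card_erase_of_mem (Finset.mem_univ i)]; simp)
        have h2 := Finset.card_insert_le w₀ ((Finset.univ.erase i).image r)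
        have h3 : 1 ≤ s := by have := i.2; omega
        omega
      · intro x hx hx0
        rw [hwevs] at hx0
        rcases mul_eq_zero.mp hx0 with h' | h'
        · rcases mul_eq_zero.mp h' with h'' | h''
          · exact absurd h'' (inv_ne_zero (hαpos i).ne')
          · rcases mul_eq_zero.mp h'' with h3 | h3
            · exact absurd h3 hεne
            · exact Finset.mem_insert.mpr (Or.inl (by linarith))
        · have hgix : (gi i).eval x = 0 := sq_eq_zero_iff.mp h'
          rw [hgiev] at hgix
          obtain ⟨j, hj, hji⟩ := Finset.prod_eq_zero_iff.mp hgix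
          exact Finset.mem_insert.mpr (Or.inr (Finset.mem_image.mpr ⟨j, hj, by linarith⟩))
  -- vanishing lemma
  have hvanish : ∀ p : ℝ[X], p.natDegree ≤ 2*s → (∀ m, p.eval (t m) = 0) → LF s y p = 0 := by
    intro p hdeg hz
    rcases eq_or_ne p 0 with rfl | hpne
    · simp [LF]
    have hM : (Finset.univ.val.map t) ≤ p.roots := by
      rw [Multiset.le_iff_subset (Finset.univ.nodup.map htinj)]
      intro x hxm
      obtain ⟨m, _, rfl⟩ := Multiset.mem_map.mp hxm
      exact mem_roots'.mpr ⟨hpne, hz m⟩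
    have hdvd : N ∣ p := by
      have hd := (Multiset.prod_X_sub_C_dvd_iff_le_roots hpne _).mpr hM
      refine dvd_trans (dvd_of_eq ?_) hd
      rw [hN, Finset.prod_eq_multiset_prod, Multiset.map_map]
      rfl
    obtain ⟨qq, hqq⟩ := hdvd
    rcases eq_or_ne qq 0 with rfl | hqqne
    · rw [mul_zero] at hqq; exact absurd hqq hpne
    have hdq : qq.natDegree + 1 ≤ s := by
      have h1 : p.natDegree = N.natDegree + qq.natDegree := by
        rw [hqq]; exact natDegree_mul hNm.ne_zero hqqne
      omega
    have he : p = C ε * (C ε * (X - C w₀) * (qq * g)) := by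
      calc p = (1 : ℝ[X]) * ((X - C w₀) * g * qq) := by rw [hqq, hNfact]; ring
      _ = (C ε * C ε) * ((X - C w₀) * g * qq) := by rw [← C_mul, hεε, C_1]
      _ = C ε * (C ε * (X - C w₀) * (qq * g)) := by ring
    rw [he, LF_C_mul, horth qq (Or.inl hdq), mul_zero]
  -- exactness of the quadrature rule
  have hexact : ∀ p : ℝ[X], p.natDegree ≤ 2*s → LF s y p = ∑ m, lam m * p.eval (t m) := by
    intro p hdeg
    set p₀ : ℝ[X] := p - ∑ m, C (p.eval (t m)) * w m with hp₀
    have hp₀deg : p₀.natDegree ≤ 2*s := by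
      refine (natDegree_sub_le _ _).trans (max_le hdeg ?_)
      exact natDegree_sum_le_of_forall_le _ _ fun m _ =>
        (natDegree_C_mul_le _ _).trans (hwdeg m)
    have hp₀z : ∀ m, p₀.eval (t m) = 0 := by
      intro m
      rw [hp₀, eval_sub, eval_finset_sum]
      simp only [eval_mul, eval_C]
      rw [Finset.sum_congr rfl fun m' _ => by rw [hwkron m' m]]
      simp
    have h0 := hvanish p₀ hp₀deg hp₀z
    have hLsub : LF s y p₀ = LF s y p - ∑ m, p.eval (t m) * lam m := by
      rw [hp₀, LF_sub, LF_sum]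
      congr 1
      exact Finset.sum_congr rfl fun m _ => LF_C_mul _ _ _ _
    rw [hLsub] at h0
    have : LF s y p = ∑ m, p.eval (t m) * lam m := by linarith
    rw [this]
    exact Finset.sum_congr rfl fun m _ => mul_comm _ _
  refine ⟨t, lam, fun i => g.coeff i, htinj, htIcc, hlampos, ?_, ?_, ?_⟩
  · intro k hk
    have hXk := hexact (X^k) (by simpa [natDegree_X_pow] using hk)
    rw [LF_X_pow s y k hk] at hXk
    simpa [eval_pow] using hXk
  · show g.coeff ((⟨s, Nat.lt_succ_self s⟩ : Fin (s+1)) : ℕ) = 1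
    have hcs : g.coeff s = 1 := by
      conv_lhs => rw [← hgd]
      exact hgm.coeff_natDegree
    exact hcs
  · intro m
    have hvg : vecPoly (s+1) (fun i : Fin (s+1) => g.coeff (i:ℕ)) = g :=
      vecPoly_coeff_self g (s+1) (by omega)
    have hsum : (∑ i : Fin (s+1), g.coeff (i:ℕ) * t m ^ (i:ℕ)) = g.eval (t m) := by
      rw [← vecPoly_eval (s+1) (fun i : Fin (s+1) => g.coeff (i:ℕ)) (t m), hvg]
    rw [hsum]
    rcases Fin.eq_zero_or_eq_succ m with rfl | ⟨j, rfl⟩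
    · rw [ht0]; simp
    · rw [htsucc, hgr j]
      simp

end Construct

section Forms

variable {s : ℕ} {y : ℕ → ℝ}

lemma quad_sum {n N : ℕ} (c : Fin n → ℝ) (lam t : Fin N → ℝ) (e : ℕ) :
    ∑ i : Fin n, ∑ j : Fin n, c i * c j * (∑ m, lam m * t m ^ ((i:ℕ)+(j:ℕ)+e))
      = ∑ m, lam m * t m ^ e * (∑ i : Fin n, c i * t m ^ (i:ℕ))^2 := by
  have hper : ∀ m : Fin N, lam m * t m ^ e * (∑ i : Fin n, c i * t m ^ (i:ℕ))^2
      = ∑ i : Fin n, ∑ j : Fin n, c i * c j * (lam m * t m ^ ((i:ℕ)+(j:ℕ)+e)) := by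
    intro m
    rw [sq, Finset.sum_mul_sum, Finset.mul_sum]
    refine Finset.sum_congr rfl fun i _ => ?_
    rw [Finset.mul_sum]
    refine Finset.sum_congr rfl fun j _ => ?_
    rw [pow_add, pow_add]
    ring
  have h1 : ∑ m, lam m * t m ^ e * (∑ i : Fin n, c i * t m ^ (i:ℕ))^2
      = ∑ m, ∑ i : Fin n, ∑ j : Fin n, c i * c j * (lam m * t m ^ ((i:ℕ)+(j:ℕ)+e)) :=
    Finset.sum_congr rfl fun m _ => hper m
  rw [h1]
  have h2 : ∑ m, ∑ i : Fin n, (∑ j : Fin n, c i * c j * (lam m * t m ^ ((i:ℕ)+(j:ℕ)+e)))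
      = ∑ i : Fin n, ∑ m, (∑ j : Fin n, c i * c j * (lam m * t m ^ ((i:ℕ)+(j:ℕ)+e))) :=
    Finset.sum_comm
  rw [h2]
  refine Finset.sum_congr rfl fun i _ => ?_
  have h3 : ∑ m, ∑ j : Fin n, c i * c j * (lam m * t m ^ ((i:ℕ)+(j:ℕ)+e))
      = ∑ j : Fin n, ∑ m, c i * c j * (lam m * t m ^ ((i:ℕ)+(j:ℕ)+e)) := Finset.sum_comm
  rw [h3]
  exact Finset.sum_congr rfl fun j _ => by rw [Finset.mul_sum]

lemma form_expand {M : Matrix (Fin (s+1)) (Fin (s+1)) ℝ} {F : Fin (s+1) → Fin (s+1) → ℝ}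
    (hent : ∀ i j, M i j = F i j) (c : Fin (s+1) → ℝ) :
    c ⬝ᵥ M.mulVec c = ∑ i, ∑ j, c i * c j * F i j := by
  simp only [dotProduct, mulVec]
  refine Finset.sum_congr rfl fun i _ => ?_
  rw [Finset.mul_sum]
  refine Finset.sum_congr rfl fun j _ => ?_
  rw [hent i j]
  ring

/-- membership of the moment of an atomic measure in the PSD sets -/
lemma zmem (t lam : Fin (s+1) → ℝ) (htIcc : ∀ i, t i ∈ Icc (0:ℝ) 1)
    (hlam : ∀ i, 0 ≤ lam i) (hmom : ∀ k, k ≤ 2*s → y k = ∑ i, lam i * t i ^ k) :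
    (H3 s (fun k => if k = 2*s+1 then (∑ i, lam i * t i ^ (2*s+1)) else y k)).PosSemidef ∧
    (H4 s (fun k => if k = 2*s+1 then (∑ i, lam i * t i ^ (2*s+1)) else y k)).PosSemidef := by
  set z : ℕ → ℝ := fun k => ∑ i, lam i * t i ^ k with hz
  set yt : ℕ → ℝ := fun k => if k = 2*s+1 then z (2*s+1) else y k with hyt
  have hytz : ∀ k, k ≤ 2*s+1 → yt k = z k := by
    intro k hk
    by_cases h : k = 2*s+1
    · simp [hyt, h]
    · have hk2 : k ≤ 2*s := by omega
      show (if k = 2*s+1 then z (2*s+1) else y k) = z k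
      rw [if_neg h, hmom k hk2]
  have hidx : ∀ i j : Fin (s+1), (i:ℕ)+(j:ℕ) ≤ 2*s := by
    intro i j; have := i.2; have := j.2; omega
  set lam' : Fin (s+1) → ℝ := fun m => lam m * (1 - t m) with hlam'
  have hzz : ∀ k, z k - z (k+1) = ∑ m, lam' m * t m ^ (k + 0) := by
    intro k
    rw [hz, hlam', ← Finset.sum_sub_distrib]
    refine Finset.sum_congr rfl fun m _ => ?_
    rw [pow_succ, pow_add]
    ring
  constructor
  · rw [Matrix.posSemidef_iff_dotProduct_mulVec]
    constructor
    · ext i j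
      simp only [H3, Matrix.conjTranspose_apply, star_trivial]
      rw [Nat.add_comm (j:ℕ) (i:ℕ)]
    · intro c
      rw [star_trivial]
      have hent : ∀ i j : Fin (s+1), (H3 s yt) i j
          = ∑ m, lam m * t m ^ ((i:ℕ)+(j:ℕ)+1) := by
        intro i j
        show yt ((i:ℕ)+(j:ℕ)+1) = _
        rw [hytz _ (by have := hidx i j; omega), hz]
      rw [form_expand hent c, quad_sum c lam t 1]
      refine Finset.sum_nonneg fun m _ => ?_
      have h0 := (htIcc m).1
      have h1 := hlam m
      positivity
  · rw [Matrix.posSemidef_iff_dotProduct_mulVec]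
    constructor
    · ext i j
      simp only [H4, Matrix.conjTranspose_apply, star_trivial]
      rw [Nat.add_comm (j:ℕ) (i:ℕ)]
    · intro c
      rw [star_trivial]
      have hent : ∀ i j : Fin (s+1), (H4 s yt) i j
          = ∑ m, lam' m * t m ^ ((i:ℕ)+(j:ℕ)+0) := by
        intro i j
        show yt ((i:ℕ)+(j:ℕ)) - yt ((i:ℕ)+(j:ℕ)+1) = _
        rw [hytz _ (by have := hidx i j; omega), hytz _ (by have := hidx i j; omega)]
        exact hzz _
      rw [form_expand hent c, quad_sum c lam' t 0]
      refine Finset.sum_nonneg fun m _ => ?_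
      have h0 := (htIcc m).1
      have h1 := (htIcc m).2
      have h2 := hlam m
      have h3 : 0 ≤ lam' m := by
        rw [hlam']
        exact mul_nonneg h2 (by linarith)
      positivity

lemma ite_sum_ss (c : Fin (s+1) → ℝ) (hcs : c ⟨s, Nat.lt_succ_self s⟩ = 1) (v : ℝ) :
    ∑ i : Fin (s+1), ∑ j : Fin (s+1),
      c i * c j * (if (i:ℕ) = s ∧ (j:ℕ) = s then v else 0) = v := by
  rw [Finset.sum_eq_single (⟨s, Nat.lt_succ_self s⟩ : Fin (s+1))]
  · rw [Finset.sum_eq_single (⟨s, Nat.lt_succ_self s⟩ : Fin (s+1))]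
    · rw [if_pos ⟨rfl, rfl⟩, hcs]; ring
    · intro j _ hj
      rw [if_neg (fun h => hj (Fin.ext h.2)), mul_zero]
    · intro h; exact absurd (Finset.mem_univ _) h
  · intro i _ hi
    refine Finset.sum_eq_zero fun j _ => ?_
    rw [if_neg (fun h => hi (Fin.ext h.1)), mul_zero]
  · intro h; exact absurd (Finset.mem_univ _) h

lemma lower_bound3 (t lam c : Fin (s+1) → ℝ)
    (hcs : c ⟨s, Nat.lt_succ_self s⟩ = 1)
    (hmom : ∀ k, k ≤ 2*s → y k = ∑ i, lam i * t i ^ k)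
    (hker : ∀ m, t m * (∑ i, c i * t m ^ (i:ℕ))^2 = 0)
    (T : ℝ) (hT : (H3 s (fun k => if k = 2*s+1 then T else y k)).PosSemidef) :
    (∑ i, lam i * t i ^ (2*s+1)) ≤ T := by
  set z : ℕ → ℝ := fun k => ∑ i, lam i * t i ^ k with hz
  set yt : ℕ → ℝ := fun k => if k = 2*s+1 then T else y k with hyt
  have hent : ∀ i j : Fin (s+1), (H3 s yt) i j
      = (∑ m, lam m * t m ^ ((i:ℕ)+(j:ℕ)+1))
        + (if (i:ℕ) = s ∧ (j:ℕ) = s then T - z (2*s+1) else 0) := by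
    intro i j
    show yt ((i:ℕ)+(j:ℕ)+1) = _
    by_cases h : (i:ℕ) = s ∧ (j:ℕ) = s
    · rw [if_pos h]
      have he : (i:ℕ)+(j:ℕ)+1 = 2*s+1 := by omega
      rw [he]
      show (if 2*s+1 = 2*s+1 then T else y (2*s+1)) = _
      rw [if_pos rfl, hz]
      simp only []
      ring
    · rw [if_neg h, add_zero]
      have he : (i:ℕ)+(j:ℕ)+1 ≠ 2*s+1 := by
        have := i.2; have := j.2; omega
      have he2 : (i:ℕ)+(j:ℕ)+1 ≤ 2*s := by
        have := i.2; have := j.2; omega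
      show (if (i:ℕ)+(j:ℕ)+1 = 2*s+1 then T else y ((i:ℕ)+(j:ℕ)+1)) = _
      rw [if_neg he, hmom _ he2]
  have hform : c ⬝ᵥ (H3 s yt).mulVec c
      = (∑ i, ∑ j, c i * c j * (∑ m, lam m * t m ^ ((i:ℕ)+(j:ℕ)+1)))
        + (∑ i : Fin (s+1), ∑ j : Fin (s+1),
            c i * c j * (if (i:ℕ) = s ∧ (j:ℕ) = s then T - z (2*s+1) else 0)) := by
    rw [form_expand hent c, ← Finset.sum_add_distrib]
    refine Finset.sum_congr rfl fun i _ => ?_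
    rw [← Finset.sum_add_distrib]
    exact Finset.sum_congr rfl fun j _ => by ring
  have hzero : (∑ i, ∑ j, c i * c j * (∑ m, lam m * t m ^ ((i:ℕ)+(j:ℕ)+1))) = 0 := by
    rw [quad_sum c lam t 1]
    refine Finset.sum_eq_zero fun m _ => ?_
    calc lam m * t m ^ 1 * (∑ i, c i * t m ^ (i:ℕ))^2
        = lam m * (t m * (∑ i, c i * t m ^ (i:ℕ))^2) := by ring
    _ = 0 := by rw [hker m, mul_zero]
  have hpos := (Matrix.posSemidef_iff_dotProduct_mulVec.mp hT).2 c
  rw [star_trivial] at hpos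
  rw [show (H3 s (fun k => if k = 2*s+1 then T else y k)) = H3 s yt from rfl] at hpos
  rw [hform, hzero, zero_add, ite_sum_ss c hcs] at hpos
  have hfin : z (2*s+1) ≤ T := by linarith
  exact hfin

lemma upper_bound4 (t lam c : Fin (s+1) → ℝ)
    (hcs : c ⟨s, Nat.lt_succ_self s⟩ = 1)
    (hmom : ∀ k, k ≤ 2*s → y k = ∑ i, lam i * t i ^ k)
    (hker : ∀ m, (1 - t m) * (∑ i, c i * t m ^ (i:ℕ))^2 = 0)
    (T : ℝ) (hT : (H4 s (fun k => if k = 2*s+1 then T else y k)).PosSemidef) :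
    T ≤ (∑ i, lam i * t i ^ (2*s+1)) := by
  set z : ℕ → ℝ := fun k => ∑ i, lam i * t i ^ k with hz
  set yt : ℕ → ℝ := fun k => if k = 2*s+1 then T else y k with hyt
  set lam' : Fin (s+1) → ℝ := fun m => lam m * (1 - t m) with hlam'
  have hzz : ∀ k, z k - z (k+1) = ∑ m, lam' m * t m ^ (k + 0) := by
    intro k
    rw [hz, hlam', ← Finset.sum_sub_distrib]
    refine Finset.sum_congr rfl fun m _ => ?_
    rw [pow_succ, pow_add]
    ring
  have hent : ∀ i j : Fin (s+1), (H4 s yt) i j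
      = (∑ m, lam' m * t m ^ ((i:ℕ)+(j:ℕ)+0))
        + (if (i:ℕ) = s ∧ (j:ℕ) = s then z (2*s+1) - T else 0) := by
    intro i j
    have hle : (i:ℕ)+(j:ℕ) ≤ 2*s := by have := i.2; have := j.2; omega
    have hy1 : yt ((i:ℕ)+(j:ℕ)) = z ((i:ℕ)+(j:ℕ)) := by
      show (if (i:ℕ)+(j:ℕ) = 2*s+1 then T else y ((i:ℕ)+(j:ℕ))) = _
      rw [if_neg (by omega), hmom _ hle]
    show yt ((i:ℕ)+(j:ℕ)) - yt ((i:ℕ)+(j:ℕ)+1) = _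
    by_cases h : (i:ℕ) = s ∧ (j:ℕ) = s
    · rw [if_pos h]
      have he : (i:ℕ)+(j:ℕ)+1 = 2*s+1 := by omega
      have hy2 : yt ((i:ℕ)+(j:ℕ)+1) = T := by
        rw [he]
        show (if 2*s+1 = 2*s+1 then T else y (2*s+1)) = T
        rw [if_pos rfl]
      rw [hy1, hy2, ← hzz]
      rw [show (i:ℕ)+(j:ℕ)+1 = 2*s+1 from he]
      rw [show (i:ℕ)+(j:ℕ) = 2*s by omega]
      ring
    · rw [if_neg h, add_zero]
      have he : (i:ℕ)+(j:ℕ)+1 ≠ 2*s+1 := by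
        have := i.2; have := j.2; omega
      have he2 : (i:ℕ)+(j:ℕ)+1 ≤ 2*s := by
        have := i.2; have := j.2; omega
      have hy2 : yt ((i:ℕ)+(j:ℕ)+1) = z ((i:ℕ)+(j:ℕ)+1) := by
        show (if (i:ℕ)+(j:ℕ)+1 = 2*s+1 then T else y ((i:ℕ)+(j:ℕ)+1)) = _
        rw [if_neg he, hmom _ he2]
      rw [hy1, hy2, hzz]
  have hform : c ⬝ᵥ (H4 s yt).mulVec c
      = (∑ i, ∑ j, c i * c j * (∑ m, lam' m * t m ^ ((i:ℕ)+(j:ℕ)+0)))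
        + (∑ i : Fin (s+1), ∑ j : Fin (s+1),
            c i * c j * (if (i:ℕ) = s ∧ (j:ℕ) = s then z (2*s+1) - T else 0)) := by
    rw [form_expand hent c, ← Finset.sum_add_distrib]
    refine Finset.sum_congr rfl fun i _ => ?_
    rw [← Finset.sum_add_distrib]
    exact Finset.sum_congr rfl fun j _ => by ring
  have hzero : (∑ i, ∑ j, c i * c j * (∑ m, lam' m * t m ^ ((i:ℕ)+(j:ℕ)+0))) = 0 := by
    rw [quad_sum c lam' t 0]
    refine Finset.sum_eq_zero fun m _ => ?_
    calc lam' m * t m ^ 0 * (∑ i, c i * t m ^ (i:ℕ))^2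
        = lam m * ((1 - t m) * (∑ i, c i * t m ^ (i:ℕ))^2) := by rw [hlam']; ring
    _ = 0 := by rw [hker m, mul_zero]
  have hpos := (Matrix.posSemidef_iff_dotProduct_mulVec.mp hT).2 c
  rw [star_trivial] at hpos
  rw [show (H4 s (fun k => if k = 2*s+1 then T else y k)) = H4 s yt from rfl] at hpos
  rw [hform, hzero, zero_add, ite_sum_ss c hcs] at hpos
  have hfin : T ≤ z (2*s+1) := by linarith
  exact hfin

end Forms

section Ident

variable {s : ℕ}

lemma eval_sum_eq (t₁ lam₁ t₂ lam₂ : Fin (s+1) → ℝ)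
    (hmom : ∀ k, k ≤ 2*s+1 → ∑ i, lam₁ i * t₁ i ^ k = ∑ i, lam₂ i * t₂ i ^ k)
    (f : ℝ[X]) (hdeg : f.natDegree ≤ 2*s+1) :
    ∑ i, lam₁ i * f.eval (t₁ i) = ∑ i, lam₂ i * f.eval (t₂ i) := by
  have key : ∀ (t lam : Fin (s+1) → ℝ),
      ∑ i, lam i * f.eval (t i)
        = ∑ k ∈ Finset.range (2*s+2), f.coeff k * (∑ i, lam i * t i ^ k) := by
    intro t lam
    have h1 : ∀ i, lam i * f.eval (t i)
        = ∑ k ∈ Finset.range (2*s+2), f.coeff k * (lam i * t i ^ k) := by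
      intro i
      rw [eval_eq_sum_range' (by omega : f.natDegree < 2*s+2), Finset.mul_sum]
      exact Finset.sum_congr rfl fun k _ => by ring
    rw [Finset.sum_congr rfl fun i (_ : i ∈ Finset.univ) => h1 i, Finset.sum_comm]
    refine Finset.sum_congr rfl fun k _ => ?_
    rw [Finset.mul_sum]
  rw [key t₁ lam₁, key t₂ lam₂]
  refine Finset.sum_congr rfl fun k hk => ?_
  rw [hmom k (by simpa [Nat.lt_succ_iff] using Finset.mem_range.mp hk)]

lemma ident (t₁ lam₁ t₂ lam₂ : Fin (s+1) → ℝ)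
    (h1 : Function.Injective t₁) (hp1 : ∀ i, 0 < lam₁ i)
    (h2 : Function.Injective t₂) (hp2 : ∀ i, 0 < lam₂ i)
    (hmom : ∀ k, k ≤ 2*s+1 → ∑ i, lam₁ i * t₁ i ^ k = ∑ i, lam₂ i * t₂ i ^ k) :
    ∃ σ : Equiv.Perm (Fin (s+1)), ∀ i, t₂ (σ i) = t₁ i ∧ lam₂ (σ i) = lam₁ i := by
  classical
  set p : ℝ[X] := ∏ i, (X - C (t₁ i)) with hp
  have hpdeg : p.natDegree = s + 1 := by
    rw [hp, natDegree_prod _ _ fun i _ => X_sub_C_ne_zero _]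
    simp
  have hpev : ∀ x : ℝ, p.eval x = ∏ i, (x - t₁ i) := by
    intro x; rw [hp, eval_prod]; simp
  have hpz1 : ∀ i, p.eval (t₁ i) = 0 := by
    intro i; rw [hpev]; exact Finset.prod_eq_zero (Finset.mem_univ i) (sub_self _)
  -- every node of the second measure is a node of the first
  have hroot : ∀ j, ∃ i, t₁ i = t₂ j := by
    intro j
    set ℓ : ℝ[X] := ∏ i ∈ Finset.univ.erase j, (X - C (t₂ i)) with hℓ
    have hℓev : ∀ x : ℝ, ℓ.eval x = ∏ i ∈ Finset.univ.erase j, (x - t₂ i) := by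
      intro x; rw [hℓ, eval_prod]; simp
    have hℓdeg : ℓ.natDegree ≤ s := by
      rw [hℓ, natDegree_prod _ _ fun i _ => X_sub_C_ne_zero _]
      simp only [natDegree_X_sub_C]
      rw [Finset.sum_const, smul_eq_mul, mul_one,
        Finset.card_erase_of_mem (Finset.mem_univ j)]
      simp
    have hfd : (p * ℓ).natDegree ≤ 2*s+1 :=
      natDegree_mul_le.trans (by omega)
    have heq := eval_sum_eq t₁ lam₁ t₂ lam₂ hmom (p * ℓ) hfd
    have hL : ∑ i, lam₁ i * (p * ℓ).eval (t₁ i) = 0 :=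
      Finset.sum_eq_zero fun i _ => by rw [eval_mul, hpz1 i, zero_mul, mul_zero]
    have hR : ∑ i, lam₂ i * (p * ℓ).eval (t₂ i)
        = lam₂ j * (p.eval (t₂ j) * ℓ.eval (t₂ j)) := by
      rw [Finset.sum_eq_single j]
      · rw [eval_mul]
      · intro i _ hij
        have hz : ℓ.eval (t₂ i) = 0 := by
          rw [hℓev]
          exact Finset.prod_eq_zero (Finset.mem_erase.mpr ⟨hij, Finset.mem_univ i⟩)
            (sub_self _)
        rw [eval_mul, hz, mul_zero, mul_zero]
      · intro h; exact absurd (Finset.mem_univ _) h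
    have hℓne : ℓ.eval (t₂ j) ≠ 0 := by
      rw [hℓev]
      refine Finset.prod_ne_zero_iff.mpr fun i hi => sub_ne_zero.mpr ?_
      exact fun h => (Finset.mem_erase.mp hi).1 (h2 h.symm)
    have hpz : p.eval (t₂ j) = 0 := by
      have h0 : lam₂ j * (p.eval (t₂ j) * ℓ.eval (t₂ j)) = 0 := by
        rw [← hR, ← heq, hL]
      rcases mul_eq_zero.mp h0 with h' | h'
      · exact absurd h' (hp2 j).ne'
      · rcases mul_eq_zero.mp h' with h'' | h''
        · exact h''
        · exact absurd h'' hℓne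
    rw [hpev] at hpz
    obtain ⟨i, _, hi⟩ := Finset.prod_eq_zero_iff.mp hpz
    exact ⟨i, by linarith⟩
  set τ : Fin (s+1) → Fin (s+1) := fun j => Classical.choose (hroot j) with hτ
  have hτs : ∀ j, t₁ (τ j) = t₂ j := fun j => Classical.choose_spec (hroot j)
  have hτinj : Function.Injective τ := by
    intro j j' hjj
    apply h2
    rw [← hτs j, ← hτs j', hjj]
  have hτbij : Function.Bijective τ := Finite.injective_iff_bijective.mp hτinj
  set e : Equiv.Perm (Fin (s+1)) := Equiv.ofBijective τ hτbij with he
  refine ⟨e.symm, fun i => ?_⟩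
  have hei : τ (e.symm i) = i := by
    have : e (e.symm i) = i := e.apply_symm_apply i
    exact this
  have ht : t₂ (e.symm i) = t₁ i := by rw [← hτs (e.symm i), hei]
  refine ⟨ht, ?_⟩
  -- weights
  set f : ℝ[X] := ∏ j ∈ Finset.univ.erase i, (X - C (t₁ j)) with hf
  have hfev : ∀ x : ℝ, f.eval x = ∏ j ∈ Finset.univ.erase i, (x - t₁ j) := by
    intro x; rw [hf, eval_prod]; simp
  have hfdeg : f.natDegree ≤ 2*s+1 := by
    rw [hf, natDegree_prod _ _ fun j _ => X_sub_C_ne_zero _]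
    simp only [natDegree_X_sub_C]
    rw [Finset.sum_const, smul_eq_mul, mul_one,
      Finset.card_erase_of_mem (Finset.mem_univ i)]
    simp
    omega
  have hdi : f.eval (t₁ i) ≠ 0 := by
    rw [hfev]
    refine Finset.prod_ne_zero_iff.mpr fun j hj => sub_ne_zero.mpr ?_
    exact fun h => (Finset.mem_erase.mp hj).1 (h1 h.symm)
  have hfz : ∀ j, j ≠ i → f.eval (t₁ j) = 0 := by
    intro j hj
    rw [hfev]
    exact Finset.prod_eq_zero (Finset.mem_erase.mpr ⟨hj, Finset.mem_univ j⟩) (sub_self _)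
  have heq := eval_sum_eq t₁ lam₁ t₂ lam₂ hmom f hfdeg
  have hL : ∑ j, lam₁ j * f.eval (t₁ j) = lam₁ i * f.eval (t₁ i) := by
    rw [Finset.sum_eq_single i]
    · intro j _ hj; rw [hfz j hj, mul_zero]
    · intro h; exact absurd (Finset.mem_univ _) h
  have hR : ∑ j, lam₂ j * f.eval (t₂ j) = lam₂ (e.symm i) * f.eval (t₁ i) := by
    rw [Finset.sum_eq_single (e.symm i)]
    · rw [ht]
    · intro j _ hj
      have hfj : f.eval (t₂ j) = 0 := by
        rw [← hτs j]
        refine hfz (τ j) fun h => hj ?_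
        have : e j = i := h
        rw [← this, Equiv.symm_apply_apply]
      rw [hfj, mul_zero]
    · intro h; exact absurd (Finset.mem_univ _) h
  have : lam₁ i * f.eval (t₁ i) = lam₂ (e.symm i) * f.eval (t₁ i) := by
    rw [← hL, heq, hR]
  exact (mul_right_cancel₀ hdi this).symm

end Ident

end Stmt17Aux

end Stmt17AuxSection

/-- for `y = (y_0, ..., y_{2s})` with `y_0 > 0`, admitting a representing
measure in `[0,1]`, with `rank H₁(y) = s + 1`: letting `l` and `u` be respectively the
minimal and maximal value of `t` for which the extension `ỹ(t) = (y_0, ..., y_{2s}, t)`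
admits a representing measure in `[0,1]` (equivalently `l = min{t : H₃(ỹ(t)) ⪰ 0}`,
`u = max{t : H₄(ỹ(t)) ⪰ 0}`), the `(s+1)`-atomic representing measure of `y`
supported in `[0,1]` is unique iff `l = u`. -/
theorem stmt17 (s : ℕ) (y : ℕ → ℝ) (h0 : 0 < y 0)
    (hrep : ∃ μ : Measure ℝ, IsFiniteMeasure μ ∧ μ (Set.Icc (0 : ℝ) 1)ᶜ = 0 ∧
        ∀ k ≤ 2 * s, y k = ∫ x, x ^ k ∂μ)
    (hrank : (H1 s y).rank = s + 1)
    (l u : ℝ)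
    (hl : l = sInf {t : ℝ | (H3 s (fun k => if k = 2 * s + 1 then t else y k)).PosSemidef})
    (hu : u = sSup {t : ℝ | (H4 s (fun k => if k = 2 * s + 1 then t else y k)).PosSemidef}) :
    (∀ t₁ lam₁ t₂ lam₂ : Fin (s + 1) → ℝ,
        Function.Injective t₁ → (∀ i, t₁ i ∈ Set.Icc (0 : ℝ) 1) → (∀ i, 0 < lam₁ i) →
        (∀ k ≤ 2 * s, y k = ∑ i, lam₁ i * t₁ i ^ k) →
        Function.Injective t₂ → (∀ i, t₂ i ∈ Set.Icc (0 : ℝ) 1) → (∀ i, 0 < lam₂ i) →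
        (∀ k ≤ 2 * s, y k = ∑ i, lam₂ i * t₂ i ^ k) →
        ∃ σ : Equiv.Perm (Fin (s + 1)), ∀ i, t₂ (σ i) = t₁ i ∧ lam₂ (σ i) = lam₁ i) ↔
      l = u := by
  classical
  obtain ⟨μ, hfin, hcomp, hmomμ⟩ := hrep
  haveI : IsFiniteMeasure μ := hfin
  obtain ⟨tL, lamL, cL, htLinj, htLIcc, hlamL, hmomL, hcLs, hkerL⟩ :=
    Stmt17Aux.construct (μ := μ) hcomp hmomμ hrank 0 1
      ⟨le_rfl, by norm_num⟩ (Or.inl rfl) (fun x hx => by simpa using hx.1)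
  obtain ⟨tU, lamU, cU, htUinj, htUIcc, hlamU, hmomU, hcUs, hkerU⟩ :=
    Stmt17Aux.construct (μ := μ) hcomp hmomμ hrank 1 (-1)
      ⟨by norm_num, le_rfl⟩ (Or.inr rfl) (fun x hx => by nlinarith [hx.2])
  have hkerL' : ∀ m, tL m * (∑ i, cL i * tL m ^ (i:ℕ))^2 = 0 := by
    intro m
    have := hkerL m
    nlinarith [hkerL m]
  have hkerU' : ∀ m, (1 - tU m) * (∑ i, cU i * tU m ^ (i:ℕ))^2 = 0 := by
    intro m
    nlinarith [hkerU m]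
  set set3 := {T : ℝ | (H3 s (fun k => if k = 2 * s + 1 then T else y k)).PosSemidef} with hset3
  set set4 := {T : ℝ | (H4 s (fun k => if k = 2 * s + 1 then T else y k)).PosSemidef} with hset4
  set lval := ∑ i, lamL i * tL i ^ (2*s+1) with hlval
  set uval := ∑ i, lamU i * tU i ^ (2*s+1) with huval
  have hlb : ∀ T ∈ set3, lval ≤ T := fun T hT =>
    Stmt17Aux.lower_bound3 tL lamL cL hcLs hmomL hkerL' T hT
  have hub : ∀ T ∈ set4, T ≤ uval := fun T hT =>
    Stmt17Aux.upper_bound4 tU lamU cU hcUs hmomU hkerU' T hT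
  have hmem3L : lval ∈ set3 :=
    (Stmt17Aux.zmem tL lamL htLIcc (fun i => (hlamL i).le) hmomL).1
  have hmem4U : uval ∈ set4 :=
    (Stmt17Aux.zmem tU lamU htUIcc (fun i => (hlamU i).le) hmomU).2
  have hleq : l = lval := by
    rw [hl]
    exact le_antisymm (csInf_le ⟨lval, hlb⟩ hmem3L) (le_csInf ⟨lval, hmem3L⟩ hlb)
  have hueq : u = uval := by
    rw [hu]
    exact le_antisymm (csSup_le ⟨uval, hmem4U⟩ hub) (le_csSup ⟨uval, hub⟩ hmem4U)
  constructor
  · intro huniq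
    obtain ⟨σ, hσ⟩ := huniq tL lamL tU lamU htLinj htLIcc hlamL hmomL
      htUinj htUIcc hlamU hmomU
    rw [hleq, hueq]
    calc lval = ∑ i, lamU (σ i) * tU (σ i) ^ (2*s+1) :=
          Finset.sum_congr rfl fun i _ => by rw [(hσ i).1, (hσ i).2]
    _ = uval := Equiv.sum_comp σ (fun j => lamU j * tU j ^ (2*s+1))
  · intro hlu t₁ lam₁ t₂ lam₂ ht₁ hI₁ hp₁ hm₁ ht₂ hI₂ hp₂ hm₂
    set z₁ := ∑ i, lam₁ i * t₁ i ^ (2*s+1) with hz₁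
    set z₂ := ∑ i, lam₂ i * t₂ i ^ (2*s+1) with hz₂
    have hmem₁ := Stmt17Aux.zmem t₁ lam₁ hI₁ (fun i => (hp₁ i).le) hm₁
    have hmem₂ := Stmt17Aux.zmem t₂ lam₂ hI₂ (fun i => (hp₂ i).le) hm₂
    have hbound : ∀ z : ℝ, z ∈ set3 → z ∈ set4 → z = l := by
      intro z hz3 hz4
      have hlz : l ≤ z := by
        rw [hl]
        exact csInf_le ⟨lval, hlb⟩ hz3
      have hzu : z ≤ u := by
        rw [hu]
        exact le_csSup ⟨uval, hub⟩ hz4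
      rw [hlu] at hlz
      linarith
    have he₁ : z₁ = l := hbound z₁ hmem₁.1 hmem₁.2
    have he₂ : z₂ = l := hbound z₂ hmem₂.1 hmem₂.2
    refine Stmt17Aux.ident t₁ lam₁ t₂ lam₂ ht₁ hp₁ ht₂ hp₂ ?_
    intro k hk
    by_cases hk2 : k ≤ 2*s
    · rw [← hm₁ k hk2, ← hm₂ k hk2]
    · have hke : k = 2*s+1 := by omega
      subst hke
      rw [← hz₁, ← hz₂, he₁, he₂]
end
end
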